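/- arXiv:0906.4816 — 7 statements merged into one kernel-verified Lean document; each statement's English description precedes it below -/
import Mathlib

section
/- Let v_1,…,v_k ∈ ℝ^k and let R be the minimal radius of a closed Euclidean ball containing {v_1,…,v_k}, with center w (the Chebyshev center). Then w lies in the convex hull of those v_i satisfying ‖v_i − w‖ = R. Equivalently, there exist nonnegative coefficients p(1),…,p(k) with Σ p(i) = 1, w = Σ p(i) v_i, and p(i) ≠ 0 only if ‖v_i − w‖ = R. -/
open Finset
open scoped RealInnerProductSpace

/-- The center of the minimal enclosing Euclidean ball of `v_1,…,v_k` is a convex combination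
of those `v_i` lying on the boundary sphere of that ball. -/
theorem chebyshev_center_in_hull_of_boundary (k : ℕ)
    (v : Fin k → EuclideanSpace ℝ (Fin k)) (w : EuclideanSpace ℝ (Fin k)) (R : ℝ)
    (hR : ∀ i, ‖v i - w‖ ≤ R)
    (hmin : ∀ (w' : EuclideanSpace ℝ (Fin k)) (R' : ℝ), (∀ i, ‖v i - w'‖ ≤ R') → R ≤ R') :
    ∃ p : Fin k → ℝ, (∀ i, 0 ≤ p i) ∧ (∑ i, p i = 1) ∧ (w = ∑ i, p i • v i) ∧
      ∀ i, p i ≠ 0 → ‖v i - w‖ = R := by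
  rcases Nat.eq_zero_or_pos k with hk | hk
  · subst hk
    exact absurd (hmin w (R - 1) (fun i => i.elim0)) (by linarith)
  haveI : NeZero k := ⟨hk.ne'⟩
  have hne : (Finset.univ : Finset (Fin k)).Nonempty := univ_nonempty
  have R0 : 0 ≤ R := le_trans (norm_nonneg _) (hR ⟨0, hk⟩)
  set S : Set (Fin k) := {i | ‖v i - w‖ = R} with hS
  -- main claim: w is in the convex hull of the boundary points
  have hw : w ∈ convexHull ℝ (v '' S) := by
    by_contra h
    have hcl : IsClosed (convexHull ℝ (v '' S)) :=
      ((Set.toFinite S).image v).isClosed_convexHull (𝕜 := ℝ)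
    obtain ⟨f, s, hfw, hfb⟩ :=
      geometric_hahn_banach_point_closed (convex_convexHull ℝ _) hcl h
    set u : EuclideanSpace ℝ (Fin k) := (InnerProductSpace.toDual ℝ _).symm f with hu
    have hinner : ∀ x, (inner ℝ u x : ℝ) = f x := fun x => InnerProductSpace.toDual_symm_apply
    set δ : ℝ := s - f w with hδ
    have hδ0 : 0 < δ := by simp [hδ]; linarith
    have hbnd : ∀ i ∈ S, δ ≤ (inner ℝ u (v i - w) : ℝ) := by
      intro i hi
      have : s < f (v i) := hfb _ (subset_convexHull ℝ _ ⟨i, hi, rfl⟩)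
      rw [inner_sub_right, hinner, hinner, hδ]
      linarith
    have key : ∀ᶠ t in nhdsWithin (0:ℝ) (Set.Ioi 0),
        ∀ i, ‖v i - (w + t • u)‖ < R := by
      rw [Filter.eventually_all]
      intro i
      have hexp : ∀ t : ℝ, ‖v i - (w + t • u)‖ ^ 2
          = ‖v i - w‖ ^ 2 - 2 * t * (inner ℝ u (v i - w) : ℝ) + t ^ 2 * ‖u‖ ^ 2 := by
        intro t
        have h1 : v i - (w + t • u) = (v i - w) - t • u := by abel
        rw [h1, norm_sub_sq_real, real_inner_smul_right, real_inner_comm, norm_smul,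
          mul_pow, Real.norm_eq_abs, sq_abs]
        ring
      by_cases hi : i ∈ S
      · -- boundary point: move strictly closer
        have hdu : 0 < (inner ℝ u (v i - w) : ℝ) := lt_of_lt_of_le hδ0 (hbnd i hi)
        have hu0 : u ≠ 0 := by
          intro h0
          rw [h0, inner_zero_left] at hdu
          exact lt_irrefl 0 hdu
        have hc : 0 < ‖u‖ ^ 2 := pow_pos (norm_pos_iff.mpr hu0) 2
        have hmem : Set.Ioo (0:ℝ) (δ / ‖u‖ ^ 2) ∈ nhdsWithin (0:ℝ) (Set.Ioi 0) :=
          Ioo_mem_nhdsGT_of_mem ⟨le_refl _, div_pos hδ0 hc⟩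
        filter_upwards [hmem] with t ht
        have ht0 : 0 < t := ht.1
        have htc : t * ‖u‖ ^ 2 < δ := (lt_div_iff₀ hc).mp ht.2
        have hiR : ‖v i - w‖ = R := hi
        have hsq : ‖v i - (w + t • u)‖ ^ 2 < R ^ 2 := by
          rw [hexp t, hiR]
          nlinarith [hbnd i hi, ht0, htc]
        exact lt_of_pow_lt_pow_left₀ 2 R0 hsq
      · -- interior point: stays inside by continuity
        have hlt : ‖v i - w‖ < R := lt_of_le_of_ne (hR i) hi
        have hcont : ContinuousAt (fun t : ℝ => ‖v i - (w + t • u)‖) 0 := by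
          fun_prop
        have h0 : (fun t : ℝ => ‖v i - (w + t • u)‖) 0 < R := by simpa using hlt
        have := hcont.eventually_lt_const h0
        exact this.filter_mono nhdsWithin_le_nhds
    obtain ⟨t, htlt, _⟩ := (key.and self_mem_nhdsWithin).exists
    set R' : ℝ := Finset.univ.sup' hne (fun i => ‖v i - (w + t • u)‖) with hR'
    have hR'lt : R' < R := Finset.sup'_lt_iff hne |>.mpr (fun i _ => htlt i)
    have : R ≤ R' := hmin (w + t • u) R' (fun i => Finset.le_sup' (fun i => ‖v i - (w + t • u)‖) (mem_univ i))
    linarith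
  -- extract a convex combination indexed by `Fin k`
  rw [mem_convexHull_iff_exists_fintype] at hw
  obtain ⟨ι, hι, q, z, hq0, hq1, hzS, hsum⟩ := hw
  simp only [Set.mem_image] at hzS
  choose g hgS hgv using hzS
  classical
  refine ⟨fun j => ∑ i ∈ Finset.univ.filter (fun i => g i = j), q i, ?_, ?_, ?_, ?_⟩
  · intro j
    exact Finset.sum_nonneg fun i _ => hq0 i
  · rw [Finset.sum_fiberwise Finset.univ g q]
    exact hq1
  · have : ∀ j : Fin k, (∑ i ∈ Finset.univ.filter (fun i => g i = j), q i) • v j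
        = ∑ i ∈ Finset.univ.filter (fun i => g i = j), q i • z i := by
      intro j
      rw [Finset.sum_smul]
      refine Finset.sum_congr rfl fun i hi => ?_
      rw [Finset.mem_filter] at hi
      rw [← hi.2, hgv]
    rw [show (∑ j, (∑ i ∈ Finset.univ.filter (fun i => g i = j), q i) • v j)
        = ∑ j, ∑ i ∈ Finset.univ.filter (fun i => g i = j), q i • z i from
      Finset.sum_congr rfl fun j _ => this j]
    rw [Finset.sum_fiberwise Finset.univ g (fun i => q i • z i)]
    exact hsum.symm
  · intro j hj
    have hj' : ∑ i ∈ Finset.univ.filter (fun i => g i = j), q i ≠ 0 := hj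
    have : (Finset.univ.filter (fun i => g i = j)).Nonempty := by
      by_contra hemp
      rw [Finset.not_nonempty_iff_eq_empty] at hemp
      rw [hemp, Finset.sum_empty] at hj'
      exact hj' rfl
    obtain ⟨i, hi⟩ := this
    rw [Finset.mem_filter] at hi
    rw [← hi.2]
    exact hgS i
end

section
/- Let v_1,…,v_k ∈ ℝ^k with Gram matrix B, let R(B) and w(B) be the radius and center of the minimal enclosing ball of {v_1,…,v_k}, and let p be a probability distribution on {1,…,k} with w(B) = Σ p(i) v_i and p(i) ≠ 0 only when ‖v_i − w(B)‖ = R(B). For β ∈ (0, 1/7), define μ(i) = (1−β) p(i) + β/k. Then Σ_{i=1}^k μ(i) ‖v_i − Σ_{j=1}^k μ(j) v_j‖² ≥ (1 − 7β) R(B)². -/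
/-- For the perturbed distribution `μ(i) = (1−β)p(i) + β/k` with `β ∈ (0, 1/7)`, the weighted
variance-type quantity is at least `(1 − 7β) R(B)²`. -/
theorem perturbed_distribution_variance_bound (k : ℕ)
    (v : Fin k → EuclideanSpace ℝ (Fin k)) (w : EuclideanSpace ℝ (Fin k)) (R : ℝ)
    (hR : ∀ i, ‖v i - w‖ ≤ R)
    (hmin : ∀ (w' : EuclideanSpace ℝ (Fin k)) (R' : ℝ), (∀ i, ‖v i - w'‖ ≤ R') → R ≤ R')
    (p : Fin k → ℝ) (hp0 : ∀ i, 0 ≤ p i) (hp1 : ∑ i, p i = 1)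
    (hw : w = ∑ i, p i • v i) (hbd : ∀ i, p i ≠ 0 → ‖v i - w‖ = R)
    (β : ℝ) (hβ : β ∈ Set.Ioo (0 : ℝ) (1 / 7))
    (μ : Fin k → ℝ) (hμ : ∀ i, μ i = (1 - β) * p i + β / k) :
    ∑ i, μ i * ‖v i - ∑ j, μ j • v j‖ ^ 2 ≥ (1 - 7 * β) * R ^ 2 := by
  obtain ⟨hβ0, hβ7⟩ := hβ
  have hk : 0 < k := by
    rcases Nat.eq_zero_or_pos k with h | h
    · subst h; simp at hp1
    · exact h
  have hkR : (0:ℝ) < k := Nat.cast_pos.mpr hk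
  have hR0 : 0 ≤ R := le_trans (norm_nonneg _) (hR ⟨0, hk⟩)
  set c := ∑ j, μ j • v j with hc
  have hsum : c = (1-β) • w + (β/(k:ℝ)) • ∑ j, v j := by
    rw [hc, hw, Finset.smul_sum, Finset.smul_sum, ← Finset.sum_add_distrib]
    refine Finset.sum_congr rfl fun j _ => ?_
    rw [hμ, add_smul, smul_smul]
  have hwc : w - c = β • (w - (k:ℝ)⁻¹ • ∑ j, v j) := by
    rw [hsum, div_eq_mul_inv]
    module
  have h1 : ∑ j : Fin k, (w - v j) = (k:ℝ) • w - ∑ j, v j := by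
    rw [Finset.sum_sub_distrib, Finset.sum_const, Finset.card_univ, Fintype.card_fin]
    congr 1
    exact (Nat.cast_smul_eq_nsmul ℝ k w).symm
  have h2 : w - (k:ℝ)⁻¹ • ∑ j, v j = (k:ℝ)⁻¹ • ∑ j, (w - v j) := by
    rw [h1, smul_sub, smul_smul, inv_mul_cancel₀ (ne_of_gt hkR), one_smul]
  have havg : ‖w - (k:ℝ)⁻¹ • ∑ j, v j‖ ≤ R := by
    rw [h2, norm_smul, Real.norm_eq_abs, abs_of_pos (inv_pos.mpr hkR)]
    have hb : ‖∑ j, (w - v j)‖ ≤ (k:ℝ) * R := by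
      refine le_trans (norm_sum_le _ _) ?_
      calc ∑ j : Fin k, ‖w - v j‖ ≤ ∑ _j : Fin k, R :=
            Finset.sum_le_sum fun j _ => by rw [norm_sub_rev]; exact hR j
        _ = (k:ℝ) * R := by
            rw [Finset.sum_const, Finset.card_univ, Fintype.card_fin, nsmul_eq_mul]
    calc (k:ℝ)⁻¹ * ‖∑ j, (w - v j)‖ ≤ (k:ℝ)⁻¹ * ((k:ℝ) * R) :=
          mul_le_mul_of_nonneg_left hb (inv_nonneg.mpr hkR.le)
      _ = R := by field_simp
  have hwcn : ‖w - c‖ ≤ β * R := by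
    rw [hwc, norm_smul, Real.norm_eq_abs, abs_of_pos hβ0]
    exact mul_le_mul_of_nonneg_left havg hβ0.le
  have key : ∀ i, p i ≠ 0 → (1-β) * R ≤ ‖v i - c‖ := by
    intro i hi
    have hbi : ‖v i - w‖ = R := hbd i hi
    have htri : ‖v i - w‖ ≤ ‖v i - c‖ + ‖w - c‖ := by
      calc ‖v i - w‖ = ‖(v i - c) + (c - w)‖ := by congr 1; abel
        _ ≤ ‖v i - c‖ + ‖c - w‖ := norm_add_le _ _
        _ = ‖v i - c‖ + ‖w - c‖ := by rw [norm_sub_rev c w]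
    nlinarith
  have hμge : ∀ i, (1-β) * p i ≤ μ i := by
    intro i
    rw [hμ]
    have : 0 ≤ β / k := div_nonneg hβ0.le hkR.le
    linarith
  have hμ0 : ∀ i, 0 ≤ μ i := fun i =>
    le_trans (mul_nonneg (by linarith) (hp0 i)) (hμge i)
  have step1 : ∑ i, (1-β) * p i * ((1-β)*R)^2 ≤ ∑ i, μ i * ‖v i - c‖^2 := by
    refine Finset.sum_le_sum fun i _ => ?_
    rcases eq_or_ne (p i) 0 with h | h
    · rw [h]
      have : 0 ≤ μ i * ‖v i - c‖^2 := mul_nonneg (hμ0 i) (sq_nonneg _)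
      nlinarith
    · have h1' := key i h
      have h0 : 0 ≤ (1-β)*R := mul_nonneg (by linarith) hR0
      have hA : ((1-β)*R)^2 ≤ ‖v i - c‖^2 := pow_le_pow_left₀ h0 h1' 2
      exact mul_le_mul (hμge i) hA (sq_nonneg _) (hμ0 i)
  have step2 : ∑ i, (1-β) * p i * ((1-β)*R)^2 = (1-β)^3 * R^2 := by
    calc ∑ i, (1-β) * p i * ((1-β)*R)^2
        = ((1-β) * ((1-β)*R)^2) * ∑ i, p i := by
          rw [Finset.mul_sum]; exact Finset.sum_congr rfl fun i _ => by ring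
      _ = (1-β)^3 * R^2 := by rw [hp1]; ring
  have step3 : (1 - 7*β) * R^2 ≤ (1-β)^3 * R^2 := by
    nlinarith [sq_nonneg R, mul_nonneg hβ0.le (sq_nonneg R),
      mul_nonneg (mul_nonneg hβ0.le hβ0.le) (sq_nonneg R)]
  calc (1 - 7*β) * R^2 ≤ (1-β)^3 * R^2 := step3
    _ = ∑ i, (1-β) * p i * ((1-β)*R)^2 := step2.symm
    _ ≤ ∑ i, μ i * ‖v i - c‖^2 := step1
end

section
/- Let γ_2 be the standard Gaussian measure on ℝ². If A ⊆ ℝ² is a cone of angle α ∈ [0, 2π] with vertex at the origin (the set of points whose polar angle lies in an interval of length α), then ‖∫_A x dγ_2(x)‖² = sin²(α/2)/(2π). -/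
open MeasureTheory RealInnerProductSpace

/-- The standard Gaussian probability measure on `ℝ^n`. -/
noncomputable def stdGaussian (n : ℕ) : Measure (EuclideanSpace ℝ (Fin n)) :=
  volume.withDensity fun x => ENNReal.ofReal ((2 * Real.pi) ^ (-(n : ℝ) / 2) * Real.exp (-‖x‖ ^ 2 / 2))

open Real Set
open scoped NNReal ENNReal

section coneAux

lemma coneAux_radial : ∫ r in Ioi (0:ℝ), r ^ 2 * Real.exp (-r ^ 2 / 2) = Real.sqrt (π / 2) := by
  have h1 := integral_comp_rpow_Ioi_of_pos
    (g := fun y => Real.sqrt y / 2 * Real.exp (-y / 2)) (p := 2) two_pos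
  have h2 : ∀ x ∈ Ioi (0:ℝ),
      ((2:ℝ) * x ^ ((2:ℝ) - 1)) • (Real.sqrt (x ^ (2:ℝ)) / 2 * Real.exp (-(x ^ (2:ℝ)) / 2))
        = x ^ 2 * Real.exp (-x ^ 2 / 2) := by
    intro x hx
    have hx0 : (0:ℝ) ≤ x := le_of_lt hx
    rw [show ((2:ℝ) - 1) = 1 by norm_num, Real.rpow_one,
      show x ^ (2:ℝ) = x ^ 2 by rw [← Real.rpow_natCast x 2]; norm_num,
      Real.sqrt_sq hx0, smul_eq_mul]
    ring
  rw [setIntegral_congr_fun measurableSet_Ioi h2] at h1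
  rw [h1]
  have h3 : ∫ y in Ioi (0:ℝ), Real.sqrt y / 2 * Real.exp (-y / 2)
      = (1/2 : ℝ) * ((1 / (1/2:ℝ)) ^ ((3:ℝ)/2) * Real.Gamma ((3:ℝ)/2)) := by
    rw [← integral_rpow_mul_exp_neg_mul_Ioi (by norm_num : (0:ℝ) < 3/2) (by norm_num : (0:ℝ) < 1/2),
      ← integral_const_mul]
    refine setIntegral_congr_fun measurableSet_Ioi fun y hy => ?_
    rw [Real.sqrt_eq_rpow, show ((3:ℝ)/2 - 1) = 1/2 by norm_num]
    rw [show -((1:ℝ)/2 * y) = -y/2 by ring]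
    ring
  rw [h3]
  have hΓ : Real.Gamma ((3:ℝ)/2) = Real.sqrt π / 2 := by
    rw [show ((3:ℝ)/2) = 1/2 + 1 by norm_num, Real.Gamma_add_one (by norm_num),
      Real.Gamma_one_half_eq]
    ring
  have h4 : ((1:ℝ) / (1/2)) ^ ((3:ℝ)/2) = 2 * Real.sqrt 2 := by
    rw [show ((1:ℝ) / (1/2)) = 2 by norm_num,
      show ((3:ℝ)/2) = 1 + 1/2 by norm_num, Real.rpow_add two_pos, Real.rpow_one,
      ← Real.sqrt_eq_rpow]
  rw [hΓ, h4, Real.sqrt_div (le_of_lt pi_pos)]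
  have h2' : Real.sqrt 2 * Real.sqrt 2 = 2 := Real.mul_self_sqrt (by norm_num)
  have h2n : Real.sqrt 2 ≠ 0 := by positivity
  field_simp
  ring_nf
  nlinarith [h2', Real.sqrt_nonneg π, Real.sqrt_nonneg 2]

lemma coneAux_mem_iff {θ α : ℝ} (hα2 : α ≤ 2 * π) {φ : ℝ}
    (h1 : θ < φ) (h2 : φ < θ + 2 * π) :
    (∃ ψ ∈ Icc θ (θ + α), Real.cos φ = Real.cos ψ ∧ Real.sin φ = Real.sin ψ) ↔ φ ≤ θ + α := by
  constructor
  · rintro ⟨ψ, ⟨hψ1, hψ2⟩, hc, hs⟩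
    have hang := Real.Angle.cos_sin_inj hc hs
    rw [Real.Angle.angle_eq_iff_two_pi_dvd_sub] at hang
    obtain ⟨k, hk⟩ := hang
    have hπ := Real.pi_pos
    rcases lt_trichotomy k 0 with hk0 | rfl | hk0
    · have hkr : (k:ℝ) ≤ -1 := by exact_mod_cast (by omega : k ≤ -1)
      have : 2 * π * (k:ℝ) ≤ 2 * π * (-1) := by nlinarith
      linarith
    · push_cast at hk; linarith
    · have hkr : (1:ℝ) ≤ (k:ℝ) := by exact_mod_cast (by omega : 1 ≤ k)
      have : 2 * π * 1 ≤ 2 * π * (k:ℝ) := by nlinarith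
      linarith
  · intro h
    exact ⟨φ, ⟨h1.le, h⟩, rfl, rfl⟩

lemma coneAux_memB {θ α r φ : ℝ} (hr : 0 < r) :
    (∃ r', 0 ≤ r' ∧ ∃ ψ ∈ Icc θ (θ + α),
        r * Real.cos φ = r' * Real.cos ψ ∧ r * Real.sin φ = r' * Real.sin ψ)
      ↔ ∃ ψ ∈ Icc θ (θ + α), Real.cos φ = Real.cos ψ ∧ Real.sin φ = Real.sin ψ := by
  constructor
  · rintro ⟨r', hr', ψ, hψ, hc, hs⟩
    have e1 : (r * Real.cos φ) ^ 2 = (r' * Real.cos ψ) ^ 2 := by rw [hc]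
    have e2 : (r * Real.sin φ) ^ 2 = (r' * Real.sin ψ) ^ 2 := by rw [hs]
    have hrr : r ^ 2 = r' ^ 2 := by
      nlinarith [Real.sin_sq_add_cos_sq φ, Real.sin_sq_add_cos_sq ψ]
    have hre : r = r' := by rw [← Real.sqrt_sq hr.le, hrr, Real.sqrt_sq hr']
    subst hre
    exact ⟨ψ, hψ, mul_left_cancel₀ hr.ne' hc, mul_left_cancel₀ hr.ne' hs⟩
  · rintro ⟨ψ, hψ, hc, hs⟩
    exact ⟨r, hr.le, ψ, hψ, by rw [hc], by rw [hs]⟩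

lemma coneAux_B_measurable {θ α : ℝ} :
    MeasurableSet {p : ℝ × ℝ | ∃ r, 0 ≤ r ∧ ∃ ψ ∈ Icc θ (θ + α),
      p.1 = r * Real.cos ψ ∧ p.2 = r * Real.sin ψ} := by
  have hset : {p : ℝ × ℝ | ∃ r, 0 ≤ r ∧ ∃ ψ ∈ Icc θ (θ + α),
        p.1 = r * Real.cos ψ ∧ p.2 = r * Real.sin ψ}
      = ⋃ n : ℕ, (fun q : ℝ × ℝ => (q.1 * Real.cos q.2, q.1 * Real.sin q.2)) ''
          (Icc (0:ℝ) n ×ˢ Icc θ (θ + α)) := by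
    ext p
    simp only [mem_setOf_eq, mem_iUnion, mem_image, mem_prod, mem_Icc, Prod.exists]
    constructor
    · rintro ⟨r, hr, ψ, hψ, h1, h2⟩
      obtain ⟨n, hn⟩ := exists_nat_ge r
      exact ⟨n, r, ψ, ⟨⟨hr, hn⟩, hψ⟩, by rw [Prod.ext_iff]; exact ⟨h1.symm, h2.symm⟩⟩
    · rintro ⟨n, r, ψ, ⟨⟨hr, _⟩, hψ⟩, heq⟩
      rw [Prod.ext_iff] at heq
      exact ⟨r, hr, ψ, hψ, heq.1.symm, heq.2.symm⟩
  rw [hset]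
  refine MeasurableSet.iUnion fun n => ?_
  exact ((isCompact_Icc.prod isCompact_Icc).image (by fun_prop)).isClosed.measurableSet

lemma coneAux_angular {θ α : ℝ} (hα0 : 0 ≤ α) (hα2 : α ≤ 2 * π) {g : ℝ → ℝ}
    (hg : Function.Periodic g (2 * π)) :
    ∫ φ in Ioo (-π) π,
      ({ψ : ℝ | ∃ ψ' ∈ Icc θ (θ + α),
        Real.cos ψ = Real.cos ψ' ∧ Real.sin ψ = Real.sin ψ'}.indicator g) φ
      = ∫ φ in θ..(θ + α), g φ := by
  set S := {ψ : ℝ | ∃ ψ' ∈ Icc θ (θ + α), Real.cos ψ = Real.cos ψ' ∧ Real.sin ψ = Real.sin ψ'}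
    with hS
  have hSper : ∀ ψ, ψ + 2 * π ∈ S ↔ ψ ∈ S := by
    intro ψ
    simp only [hS, mem_setOf_eq, Real.cos_add_two_pi, Real.sin_add_two_pi]
  have hFper : Function.Periodic (S.indicator g) (2 * π) := by
    intro ψ
    by_cases h : ψ ∈ S
    · rw [Set.indicator_of_mem ((hSper ψ).mpr h), Set.indicator_of_mem h, hg ψ]
    · rw [Set.indicator_of_notMem (fun hc => h ((hSper ψ).mp hc)), Set.indicator_of_notMem h]
  have hπ := Real.pi_pos
  calc ∫ φ in Ioo (-π) π, S.indicator g φ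
      = ∫ φ in Ioc (-π) π, S.indicator g φ := (integral_Ioc_eq_integral_Ioo).symm
    _ = ∫ φ in (-π)..π, S.indicator g φ := (intervalIntegral.integral_of_le (by linarith)).symm
    _ = ∫ φ in θ..(θ + 2 * π), S.indicator g φ := by
        have h := hFper.intervalIntegral_add_eq (-π) θ
        rw [show -π + 2 * π = π by ring] at h
        exact h
    _ = ∫ φ in Ioc θ (θ + 2 * π), S.indicator g φ := intervalIntegral.integral_of_le (by linarith)
    _ = ∫ φ in Ioc θ (θ + 2 * π), (Ioc θ (θ + α)).indicator g φ := by
        refine setIntegral_congr_ae measurableSet_Ioc ?_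
        have hsing : ∀ᵐ φ : ℝ, φ ≠ θ + 2 * π := by
          refine ae_iff.mpr ?_
          simp [not_not, Set.setOf_eq_eq_singleton']
        filter_upwards [hsing] with φ hne hmem
        have hφlt : φ < θ + 2 * π := lt_of_le_of_ne hmem.2 hne
        by_cases hle : φ ≤ θ + α
        · rw [Set.indicator_of_mem (show φ ∈ S from (coneAux_mem_iff hα2 hmem.1 hφlt).mpr hle)]
          exact (Set.indicator_of_mem (show φ ∈ Ioc θ (θ + α) from ⟨hmem.1, hle⟩) g).symm
        · rw [Set.indicator_of_notMem
              (show φ ∉ S from fun hc => hle ((coneAux_mem_iff hα2 hmem.1 hφlt).mp hc))]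
          exact (Set.indicator_of_notMem (show φ ∉ Ioc θ (θ + α) from fun hc => hle hc.2) g).symm
    _ = ∫ φ in Ioc θ (θ + 2 * π) ∩ Ioc θ (θ + α), g φ := setIntegral_indicator measurableSet_Ioc
    _ = ∫ φ in Ioc θ (θ + α), g φ := by
        rw [Set.Ioc_inter_Ioc, max_self, min_eq_right (by linarith : θ + α ≤ θ + 2 * π)]
    _ = ∫ φ in θ..(θ + α), g φ := (intervalIntegral.integral_of_le (by linarith)).symm

lemma coneAux_planar {θ α : ℝ} (hα0 : 0 ≤ α) (hα2 : α ≤ 2 * π)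
    (u : ℝ × ℝ → ℝ) (g : ℝ → ℝ) (hg : Function.Periodic g (2 * π))
    (hu : ∀ r ψ : ℝ, u (r * Real.cos ψ, r * Real.sin ψ) = r * g ψ) :
    ∫ p in {p : ℝ × ℝ | ∃ r, 0 ≤ r ∧ ∃ ψ ∈ Icc θ (θ + α),
        p.1 = r * Real.cos ψ ∧ p.2 = r * Real.sin ψ},
      (2 * π)⁻¹ * Real.exp (-(p.1 ^ 2 + p.2 ^ 2) / 2) * u p
    = (2 * π)⁻¹ * Real.sqrt (π / 2) * ∫ φ in θ..(θ + α), g φ := by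
  set B := {p : ℝ × ℝ | ∃ r, 0 ≤ r ∧ ∃ ψ ∈ Icc θ (θ + α),
      p.1 = r * Real.cos ψ ∧ p.2 = r * Real.sin ψ} with hBdef
  set S := {ψ : ℝ | ∃ ψ' ∈ Icc θ (θ + α), Real.cos ψ = Real.cos ψ' ∧ Real.sin ψ = Real.sin ψ'}
    with hSdef
  set f : ℝ × ℝ → ℝ := B.indicator (fun p => (2 * π)⁻¹ * Real.exp (-(p.1 ^ 2 + p.2 ^ 2) / 2) * u p)
    with hfdef
  have hB : MeasurableSet B := coneAux_B_measurable
  have hsymm : ∀ p : ℝ × ℝ, polarCoord.symm p = (p.1 * Real.cos p.2, p.1 * Real.sin p.2) :=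
    fun _ => rfl
  have htarget : polarCoord.target = Ioi (0:ℝ) ×ˢ Ioo (-π) π := rfl
  have key : ∀ p ∈ Ioi (0:ℝ) ×ˢ Ioo (-π) π,
      p.1 • f (polarCoord.symm p)
        = ((2 * π)⁻¹ * (p.1 ^ 2 * Real.exp (-p.1 ^ 2 / 2))) * S.indicator g p.2 := by
    rintro ⟨r, φ⟩ ⟨hr, hφ⟩
    simp only [mem_Ioi] at hr
    dsimp only
    have hsq : (r * Real.cos φ) ^ 2 + (r * Real.sin φ) ^ 2 = r ^ 2 := by
      have := Real.sin_sq_add_cos_sq φ; nlinarith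
    rw [hsymm, hfdef]
    dsimp only
    by_cases hmem : φ ∈ S
    · rw [Set.indicator_of_mem hmem g,
        Set.indicator_of_mem (show (r * Real.cos φ, r * Real.sin φ) ∈ B from
          (coneAux_memB hr).mpr hmem)]
      simp only [hsq, hu, smul_eq_mul]
      ring
    · rw [Set.indicator_of_notMem hmem g,
        Set.indicator_of_notMem (show (r * Real.cos φ, r * Real.sin φ) ∉ B from
          fun hc => hmem ((coneAux_memB hr).mp hc))]
      simp
  calc ∫ p in B, (2 * π)⁻¹ * Real.exp (-(p.1 ^ 2 + p.2 ^ 2) / 2) * u p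
      = ∫ p : ℝ × ℝ, f p := (integral_indicator hB).symm
    _ = ∫ p in polarCoord.target, p.1 • f (polarCoord.symm p) :=
        (integral_comp_polarCoord_symm f).symm
    _ = ∫ p in Ioi (0:ℝ) ×ˢ Ioo (-π) π,
          ((2 * π)⁻¹ * (p.1 ^ 2 * Real.exp (-p.1 ^ 2 / 2))) * S.indicator g p.2 := by
        rw [htarget]
        exact setIntegral_congr_fun (measurableSet_Ioi.prod measurableSet_Ioo) key
    _ = (∫ r in Ioi (0:ℝ), (2 * π)⁻¹ * (r ^ 2 * Real.exp (-r ^ 2 / 2))) *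
          ∫ φ in Ioo (-π) π, S.indicator g φ := by
        rw [Measure.volume_eq_prod]
        exact setIntegral_prod_mul (fun r : ℝ => (2 * π)⁻¹ * (r ^ 2 * Real.exp (-r ^ 2 / 2)))
          (S.indicator g) _ _
    _ = (2 * π)⁻¹ * Real.sqrt (π / 2) * ∫ φ in θ..(θ + α), g φ := by
        rw [integral_const_mul, coneAux_radial, coneAux_angular hα0 hα2 hg, mul_assoc]

noncomputable def coneAux_eqv : EuclideanSpace ℝ (Fin 2) ≃ᵐ ℝ × ℝ :=
  (MeasurableEquiv.toLp 2 (Fin 2 → ℝ)).symm.trans (MeasurableEquiv.piFinTwo fun _ => ℝ)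

lemma coneAux_eqv_mp : MeasurePreserving coneAux_eqv volume volume :=
  (EuclideanSpace.volume_preserving_symm_measurableEquiv_toLp (Fin 2)).trans
    (volume_preserving_piFinTwo fun _ => ℝ)

lemma coneAux_norm_sq (x : EuclideanSpace ℝ (Fin 2)) : ‖x‖ ^ 2 = (x 0) ^ 2 + (x 1) ^ 2 := by
  rw [EuclideanSpace.norm_eq, Real.sq_sqrt (by positivity)]
  simp [Fin.sum_univ_two, sq_abs]

lemma coneAux_int1 : Integrable (fun x : ℝ => |x| * Real.exp (-x ^ 2 / 2)) := by
  have h := (integrable_mul_exp_neg_mul_sq (b := 1/2) (by norm_num)).abs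
  refine h.congr (Filter.Eventually.of_forall fun x => ?_)
  show |x * Real.exp (-(1/2) * x ^ 2)| = |x| * Real.exp (-x ^ 2 / 2)
  rw [abs_mul, abs_of_pos (Real.exp_pos _)]
  ring_nf

lemma coneAux_int2 : Integrable (fun x : ℝ => Real.exp (-x ^ 2 / 2)) := by
  have h := integrable_exp_neg_mul_sq (b := 1/2) (by norm_num)
  refine h.congr (Filter.Eventually.of_forall fun x => ?_)
  ring_nf

lemma coneAux_intG :
    Integrable (fun p : ℝ × ℝ =>
      (2 * π)⁻¹ * Real.exp (-(p.1 ^ 2 + p.2 ^ 2) / 2) * Real.sqrt (p.1 ^ 2 + p.2 ^ 2)) volume := by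
  have hbd : Integrable (fun p : ℝ × ℝ =>
      (2 * π)⁻¹ * ((|p.1| * Real.exp (-p.1 ^ 2 / 2)) * Real.exp (-p.2 ^ 2 / 2)
        + Real.exp (-p.1 ^ 2 / 2) * (|p.2| * Real.exp (-p.2 ^ 2 / 2)))) volume := by
    rw [Measure.volume_eq_prod]
    exact ((coneAux_int1.mul_prod coneAux_int2).add (coneAux_int2.mul_prod coneAux_int1)).const_mul _
  refine hbd.mono' ?_ (Filter.Eventually.of_forall fun p => ?_)
  · refine Continuous.aestronglyMeasurable ?_
    fun_prop
  · have hexp : Real.exp (-(p.1 ^ 2 + p.2 ^ 2) / 2)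
        = Real.exp (-p.1 ^ 2 / 2) * Real.exp (-p.2 ^ 2 / 2) := by
      rw [← Real.exp_add]; ring_nf
    have hsqrt : Real.sqrt (p.1 ^ 2 + p.2 ^ 2) ≤ |p.1| + |p.2| := by
      rw [show |p.1| + |p.2| = Real.sqrt ((|p.1| + |p.2|) ^ 2) from
        (Real.sqrt_sq (by positivity)).symm]
      apply Real.sqrt_le_sqrt
      nlinarith [sq_abs p.1, sq_abs p.2, abs_nonneg p.1, abs_nonneg p.2]
    have hπ := Real.pi_pos
    rw [Real.norm_eq_abs, abs_of_nonneg (by positivity)]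
    rw [hexp]
    calc (2 * π)⁻¹ * (Real.exp (-p.1 ^ 2 / 2) * Real.exp (-p.2 ^ 2 / 2))
          * Real.sqrt (p.1 ^ 2 + p.2 ^ 2)
        ≤ (2 * π)⁻¹ * (Real.exp (-p.1 ^ 2 / 2) * Real.exp (-p.2 ^ 2 / 2)) * (|p.1| + |p.2|) := by
          gcongr
      _ = (2 * π)⁻¹ * ((|p.1| * Real.exp (-p.1 ^ 2 / 2)) * Real.exp (-p.2 ^ 2 / 2)
            + Real.exp (-p.1 ^ 2 / 2) * (|p.2| * Real.exp (-p.2 ^ 2 / 2))) := by ring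

lemma coneAux_integrable :
    Integrable (fun x : EuclideanSpace ℝ (Fin 2) =>
      ((2 * π)⁻¹ * Real.exp (-‖x‖ ^ 2 / 2)) • x) volume := by
  have hπ := Real.pi_pos
  have hG := coneAux_intG
  have hcomp : Integrable ((fun p : ℝ × ℝ =>
      (2 * π)⁻¹ * Real.exp (-(p.1 ^ 2 + p.2 ^ 2) / 2) * Real.sqrt (p.1 ^ 2 + p.2 ^ 2))
        ∘ coneAux_eqv) volume := by
    rw [← coneAux_eqv_mp.map_eq] at hG
    exact (MeasurableEquiv.measurableEmbedding _).integrable_map_iff.mp hG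
  have hg : Integrable (fun x : EuclideanSpace ℝ (Fin 2) =>
      (2 * π)⁻¹ * Real.exp (-‖x‖ ^ 2 / 2) * ‖x‖) volume := by
    refine hcomp.congr (Filter.Eventually.of_forall fun x => ?_)
    simp only [Function.comp_apply]
    rw [show (coneAux_eqv x : ℝ × ℝ) = (x 0, x 1) from rfl, coneAux_norm_sq x]
    congr 1
    rw [← coneAux_norm_sq x, Real.sqrt_sq (norm_nonneg x)]
  refine hg.mono' ?_ (Filter.Eventually.of_forall fun x => ?_)
  · refine Continuous.aestronglyMeasurable ?_
    exact (((continuous_const.mul ((Real.continuous_exp.comp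
      ((continuous_norm.pow 2).neg.div_const 2))))).smul continuous_id)
  · rw [norm_smul, Real.norm_eq_abs, abs_of_nonneg (by positivity)]

end coneAux

/-- The Gaussian moment of a planar cone of angle `α` with vertex at the origin has squared
norm `sin²(α/2)/(2π)`. -/
theorem gaussian_moment_of_cone (α θ : ℝ) (hα : α ∈ Set.Icc (0 : ℝ) (2 * Real.pi))
    (A : Set (EuclideanSpace ℝ (Fin 2)))
    (hA : A = {x : EuclideanSpace ℝ (Fin 2) | ∃ r : ℝ, 0 ≤ r ∧
      ∃ φ ∈ Set.Icc θ (θ + α), x 0 = r * Real.cos φ ∧ x 1 = r * Real.sin φ}) :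
    ‖∫ x in A, x ∂stdGaussian 2‖ ^ 2 = Real.sin (α / 2) ^ 2 / (2 * Real.pi) := by
  obtain ⟨hα0, hα2⟩ := hα
  have hπ := Real.pi_pos
  set B : Set (ℝ × ℝ) := {p : ℝ × ℝ | ∃ r, 0 ≤ r ∧ ∃ ψ ∈ Set.Icc θ (θ + α),
      p.1 = r * Real.cos ψ ∧ p.2 = r * Real.sin ψ} with hBdef
  have hAB : A = ⇑coneAux_eqv ⁻¹' B := by
    rw [hA]; rfl
  have hAm : MeasurableSet A := by
    rw [hAB]; exact coneAux_eqv.measurable coneAux_B_measurable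
  have hγ : stdGaussian 2 = volume.withDensity
      fun x => ENNReal.ofReal ((2 * π)⁻¹ * Real.exp (-‖x‖ ^ 2 / 2)) := by
    unfold stdGaussian
    congr 1
    funext x
    norm_num [Real.rpow_neg_one]
  have hmeas : Measurable fun x : EuclideanSpace ℝ (Fin 2) =>
      ((2 * π)⁻¹ * Real.exp (-‖x‖ ^ 2 / 2)).toNNReal := by fun_prop
  have hsmul_eq : ∀ x : EuclideanSpace ℝ (Fin 2),
      (((2 * π)⁻¹ * Real.exp (-‖x‖ ^ 2 / 2)).toNNReal : ℝ≥0) • x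
        = ((2 * π)⁻¹ * Real.exp (-‖x‖ ^ 2 / 2)) • x := by
    intro x
    rw [NNReal.smul_def, Real.coe_toNNReal _ (by positivity)]
  have hint : Integrable (fun x : EuclideanSpace ℝ (Fin 2) => x) (stdGaussian 2) := by
    rw [hγ]
    refine (integrable_withDensity_iff_integrable_smul hmeas).mpr ?_
    exact coneAux_integrable.congr (Filter.Eventually.of_forall fun x => (hsmul_eq x).symm)
  have hvcomp : ∀ i : Fin 2, (∫ x in A, x ∂stdGaussian 2) i = ∫ x in A, x i ∂stdGaussian 2 := by
    intro i
    have h := (EuclideanSpace.proj i :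
      EuclideanSpace ℝ (Fin 2) →L[ℝ] ℝ).integral_comp_comm (hint.restrict (s := A))
    simpa [EuclideanSpace.proj] using h.symm
  have hscalar : ∀ u : ℝ × ℝ → ℝ, Measurable u →
      ∫ x in A, u (coneAux_eqv x) ∂stdGaussian 2
        = ∫ p in B, (2 * π)⁻¹ * Real.exp (-(p.1 ^ 2 + p.2 ^ 2) / 2) * u p := by
    intro u hu
    rw [hγ, restrict_withDensity hAm]
    rw [show (fun x : EuclideanSpace ℝ (Fin 2) =>
        ENNReal.ofReal ((2 * π)⁻¹ * Real.exp (-‖x‖ ^ 2 / 2)))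
      = fun x => ((((2 * π)⁻¹ * Real.exp (-‖x‖ ^ 2 / 2)).toNNReal : ℝ≥0) : ℝ≥0∞) from rfl]
    rw [integral_withDensity_eq_integral_smul hmeas]
    have himg : coneAux_eqv '' A = B := by
      rw [hAB, Set.image_preimage_eq _ coneAux_eqv.surjective]
    rw [← himg,
      coneAux_eqv_mp.setIntegral_image_emb (MeasurableEquiv.measurableEmbedding _)
        (fun p => (2 * π)⁻¹ * Real.exp (-(p.1 ^ 2 + p.2 ^ 2) / 2) * u p) A]
    refine setIntegral_congr_fun hAm fun x hx => ?_
    rw [show (coneAux_eqv x : ℝ × ℝ) = (x 0, x 1) from rfl]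
    dsimp only
    rw [← coneAux_norm_sq x, NNReal.smul_def, Real.coe_toNNReal _ (by positivity), smul_eq_mul]
  have hv0 : (∫ x in A, x ∂stdGaussian 2) 0
      = (2 * π)⁻¹ * Real.sqrt (π / 2) * (Real.sin (θ + α) - Real.sin θ) := by
    rw [hvcomp 0,
      show (fun x : EuclideanSpace ℝ (Fin 2) => x 0)
        = fun x : EuclideanSpace ℝ (Fin 2) => (fun p : ℝ × ℝ => p.1) (coneAux_eqv x) from rfl,
      hscalar _ measurable_fst,
      coneAux_planar hα0 hα2 (fun p : ℝ × ℝ => p.1) Real.cos Real.cos_periodic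
        (fun r ψ => rfl),
      integral_cos]
  have hv1 : (∫ x in A, x ∂stdGaussian 2) 1
      = (2 * π)⁻¹ * Real.sqrt (π / 2) * (Real.cos θ - Real.cos (θ + α)) := by
    rw [hvcomp 1,
      show (fun x : EuclideanSpace ℝ (Fin 2) => x 1)
        = fun x : EuclideanSpace ℝ (Fin 2) => (fun p : ℝ × ℝ => p.2) (coneAux_eqv x) from rfl,
      hscalar _ measurable_snd,
      coneAux_planar hα0 hα2 (fun p : ℝ × ℝ => p.2) Real.sin Real.sin_periodic
        (fun r ψ => rfl),
      integral_sin]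
  rw [coneAux_norm_sq (∫ x in A, x ∂stdGaussian 2), hv0, hv1]
  have key : (Real.sin (θ + α) - Real.sin θ) ^ 2 + (Real.cos θ - Real.cos (θ + α)) ^ 2
      = 4 * Real.sin (α / 2) ^ 2 := by
    have p1 := Real.sin_sq_add_cos_sq θ
    have p2 := Real.sin_sq_add_cos_sq (θ + α)
    have h1 : Real.cos (θ + α - θ)
        = Real.cos (θ + α) * Real.cos θ + Real.sin (θ + α) * Real.sin θ := Real.cos_sub _ _
    rw [show θ + α - θ = α by ring] at h1
    have h2 : Real.cos α = 1 - 2 * Real.sin (α / 2) ^ 2 := by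
      rw [show α = 2 * (α / 2) by ring, Real.cos_two_mul, Real.cos_sq']
      ring_nf
    nlinarith [h1, h2, p1, p2]
  have hR : Real.sqrt (π / 2) ^ 2 = π / 2 := Real.sq_sqrt (by positivity)
  have expand : ∀ a b c R : ℝ,
      (c * R * a) ^ 2 + (c * R * b) ^ 2 = c ^ 2 * R ^ 2 * (a ^ 2 + b ^ 2) := by
    intros; ring
  rw [expand, hR, key]
  field_simp
  ring
end

section
/- For every c > 0, the maximum of sin²(α_1/2) + sin²(α_2/2) + c·sin²(α_3/2) over α_1, α_2, α_3 ∈ [0, 2π] with α_1 + α_2 + α_3 = 2π equals (2c+1)²/(4c) if c ≥ 1/2, and equals 2 if c ≤ 1/2. -/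
lemma sin_half_sq (y : ℝ) : Real.sin (y / 2) ^ 2 = (1 - Real.cos y) / 2 := by
  have h1 := Real.cos_two_mul (y / 2)
  have h2 : 2 * (y / 2) = y := by ring
  rw [h2] at h1
  rw [Real.sin_sq]
  linarith

/-- The maximum of `sin²(α₁/2) + sin²(α₂/2) + c sin²(α₃/2)` over angles in `[0, 2π]` summing
to `2π` equals `(2c+1)²/(4c)` if `c ≥ 1/2` and `2` if `c ≤ 1/2`. -/
theorem max_sin_sq_three_angles (c : ℝ) (hc : 0 < c) :
    IsGreatest {r : ℝ | ∃ α₁ α₂ α₃ : ℝ,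
        α₁ ∈ Set.Icc (0 : ℝ) (2 * Real.pi) ∧ α₂ ∈ Set.Icc (0 : ℝ) (2 * Real.pi) ∧
        α₃ ∈ Set.Icc (0 : ℝ) (2 * Real.pi) ∧ α₁ + α₂ + α₃ = 2 * Real.pi ∧
        r = Real.sin (α₁ / 2) ^ 2 + Real.sin (α₂ / 2) ^ 2 + c * Real.sin (α₃ / 2) ^ 2}
      (if 1 / 2 ≤ c then (2 * c + 1) ^ 2 / (4 * c) else 2) := by
  have hpi := Real.pi_pos
  constructor
  · -- membership
    split_ifs with h
    · -- c ≥ 1/2 : use α₁ = α₂ = arccos (-1/(2c))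
      set A := Real.arccos (-1 / (2 * c)) with hA
      have h2c : (0:ℝ) < 2 * c := by linarith
      have hinv : 1 / (2 * c) ≤ 1 := by rw [div_le_one h2c]; linarith
      have hinv0 : 0 < 1 / (2 * c) := by positivity
      have hb1 : (-1 : ℝ) ≤ -1 / (2 * c) := by rw [neg_div]; linarith
      have hb2 : -1 / (2 * c) ≤ 1 := by rw [neg_div]; linarith
      have hcosA : Real.cos A = -1 / (2 * c) := Real.cos_arccos hb1 hb2
      have hA0 : 0 ≤ A := Real.arccos_nonneg _
      have hAπ : A ≤ Real.pi := Real.arccos_le_pi _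
      refine ⟨A, A, 2 * Real.pi - 2 * A, ⟨hA0, by linarith⟩, ⟨hA0, by linarith⟩,
        ⟨by linarith, by linarith⟩, by ring, ?_⟩
      have h3 : (2 * Real.pi - 2 * A) / 2 = Real.pi - A := by ring
      rw [h3, Real.sin_pi_sub, sin_half_sq, hcosA, Real.sin_sq, hcosA]
      field_simp
      ring
    · -- c < 1/2 : use α₁ = α₂ = π, α₃ = 0
      refine ⟨Real.pi, Real.pi, 0, ⟨by linarith, by linarith⟩, ⟨by linarith, by linarith⟩,
        ⟨le_refl _, by linarith⟩, by ring, ?_⟩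
      rw [show Real.pi / 2 = Real.pi / 2 from rfl, Real.sin_pi_div_two]
      norm_num
  · -- upper bound
    rintro r ⟨a, b, d, ha, hb, hd, hsum, rfl⟩
    have hd' : d = 2 * Real.pi - (a + b) := by linarith
    have hcd : Real.cos d = Real.cos (a + b) := by
      rw [hd', Real.cos_two_pi_sub]
    set x := Real.cos ((a + b) / 2) with hx
    set t := Real.cos ((a - b) / 2) with ht
    have hab : Real.cos a + Real.cos b = 2 * x * t := Real.cos_add_cos a b
    have hab2 : Real.cos (a + b) = 2 * x ^ 2 - 1 := by
      have := Real.cos_two_mul ((a + b) / 2)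
      rw [show 2 * ((a + b) / 2) = a + b by ring] at this
      rw [this]
    have hx1 : -1 ≤ x := Real.neg_one_le_cos _
    have hx2 : x ≤ 1 := Real.cos_le_one _
    have ht1 : -1 ≤ t := Real.neg_one_le_cos _
    have ht2 : t ≤ 1 := Real.cos_le_one _
    have hval : Real.sin (a / 2) ^ 2 + Real.sin (b / 2) ^ 2 + c * Real.sin (d / 2) ^ 2
        = 1 + c - x * t - c * x ^ 2 := by
      rw [sin_half_sq, sin_half_sq, sin_half_sq, hcd, hab2]
      linear_combination (-1/2 : ℝ) * hab
    rw [hval]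
    split_ifs with h
    · rw [le_div_iff₀ (by linarith : (0:ℝ) < 4 * c)]
      nlinarith [sq_nonneg (2 * c * x + t),
        mul_nonneg (by linarith : (0:ℝ) ≤ 1 - t) (by linarith : (0:ℝ) ≤ 1 + t)]
    · push_neg at h
      nlinarith [sq_nonneg (x + t), mul_nonneg (by linarith : (0:ℝ) ≤ 1 - 2 * c)
        (by nlinarith : (0:ℝ) ≤ 1 - x ^ 2)]
end

section
/- Let B be a k×k symmetric positive semidefinite matrix with b_{ij} = ⟨v_i, v_j⟩, and define C(B) = C(k−1, B) (the maximal value of Σ_{i,j} b_{ij} ⟨z_i, z_j⟩ over measurable partitions {A_1,…,A_k} of ℝ^{k−1}, where z_i = ∫_{A_i} x dγ_{k−1}(x)). Let R(B) be the radius of the smallest Euclidean ball containing {v_1,…,v_k}. Then C(B) ≤ R(B)². -/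
open MeasureTheory RealInnerProductSpace

namespace CBAux

open Real Filter Topology

noncomputable def gd (t : ℝ) : ℝ := (2 * Real.pi) ^ (-(1:ℝ)/2) * Real.exp (-t^2/2)

lemma gd_nonneg (t : ℝ) : 0 ≤ gd t := by
  unfold gd; positivity

lemma exp_form : (fun t : ℝ => Real.exp (-t^2/2)) = fun t : ℝ => Real.exp (-(1/2 : ℝ) * t^2) := by
  funext t; ring_nf

lemma integrable_exp_part : Integrable (fun t : ℝ => Real.exp (-t^2/2)) := by
  rw [exp_form]; exact integrable_exp_neg_mul_sq (by norm_num)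

lemma integrable_gd : Integrable gd := integrable_exp_part.const_mul _

lemma integrable_id_exp : Integrable (fun t : ℝ => t * Real.exp (-t^2/2)) := by
  have := integrable_mul_exp_neg_mul_sq (b := 1/2) (by norm_num)
  refine this.congr (Filter.Eventually.of_forall fun t => by ring_nf)

lemma integrable_sq_exp : Integrable (fun t : ℝ => t^2 * Real.exp (-t^2/2)) := by
  have := integrable_rpow_mul_exp_neg_mul_sq (b := 1/2) (by norm_num) (s := 2) (by norm_num)
  refine this.congr (Filter.Eventually.of_forall fun t => ?_)
  show t ^ (2:ℝ) * Real.exp (-(1/2) * t^2) = t^2 * Real.exp (-t^2/2)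
  rw [show (2:ℝ) = ((2:ℕ):ℝ) by norm_num, Real.rpow_natCast]
  ring_nf

lemma integral_exp_part : ∫ t : ℝ, Real.exp (-t^2/2) = Real.sqrt (2 * Real.pi) := by
  rw [exp_form, integral_gaussian]
  rw [show Real.pi / (1/2) = 2 * Real.pi by ring]

lemma c_mul_sqrt : (2 * Real.pi) ^ (-(1:ℝ)/2) * Real.sqrt (2 * Real.pi) = 1 := by
  rw [Real.sqrt_eq_rpow, ← Real.rpow_add (by positivity)]
  norm_num

lemma integral_gd : ∫ t, gd t = 1 := by
  unfold gd
  rw [integral_const_mul, integral_exp_part, c_mul_sqrt]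

lemma integrable_id_gd : Integrable (fun t : ℝ => t * gd t) := by
  refine (integrable_id_exp.const_mul ((2 * Real.pi) ^ (-(1:ℝ)/2))).congr
    (Filter.Eventually.of_forall fun t => ?_)
  unfold gd; ring

lemma integrable_sq_gd : Integrable (fun t : ℝ => t^2 * gd t) := by
  refine (integrable_sq_exp.const_mul ((2 * Real.pi) ^ (-(1:ℝ)/2))).congr
    (Filter.Eventually.of_forall fun t => ?_)
  unfold gd; ring

lemma hasDeriv_negexp (t : ℝ) :
    HasDerivAt (fun t : ℝ => -Real.exp (-t^2/2)) (t * Real.exp (-t^2/2)) t := by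
  have h1 : HasDerivAt (fun t : ℝ => -t^2/2) (-t) t := by
    have := ((hasDerivAt_pow 2 t).div_const 2).neg
    refine HasDerivAt.congr_deriv (this.congr_of_eventuallyEq ?_) (by push_cast; ring)
    exact Filter.Eventually.of_forall fun s => by simp only [Pi.neg_apply]; ring
  have h2 := (h1.exp).neg
  refine HasDerivAt.congr_deriv h2 (by ring)

lemma tendsto_sq_atTop : Tendsto (fun t : ℝ => t^2) atTop atTop :=
  tendsto_pow_atTop two_ne_zero

lemma tendsto_sq_atBot : Tendsto (fun t : ℝ => t^2) atBot atTop := by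
  have := tendsto_sq_atTop.comp tendsto_neg_atBot_atTop
  refine Tendsto.congr (fun t => ?_) this
  simp [Function.comp]

lemma tendsto_negexp_aux {l : Filter ℝ} (h : Tendsto (fun t : ℝ => t^2) l atTop) :
    Tendsto (fun t : ℝ => -Real.exp (-t^2/2)) l (𝓝 0) := by
  have h1 : Tendsto (fun t : ℝ => -t^2/2) l atBot := by
    have := tendsto_neg_atTop_atBot.comp (h.atTop_div_const (by norm_num : (0:ℝ) < 2))
    refine Tendsto.congr (fun t => ?_) this
    simp [Function.comp, neg_div]
  have h2 := Real.tendsto_exp_atBot.comp h1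
  have h3 : Tendsto (fun t : ℝ => Real.exp (-t^2/2)) l (𝓝 0) := h2
  simpa using h3.neg

lemma tendsto_negexp_top : Tendsto (fun t : ℝ => -Real.exp (-t^2/2)) atTop (𝓝 0) :=
  tendsto_negexp_aux tendsto_sq_atTop

lemma tendsto_negexp_bot : Tendsto (fun t : ℝ => -Real.exp (-t^2/2)) atBot (𝓝 0) :=
  tendsto_negexp_aux tendsto_sq_atBot

lemma integral_id_exp : ∫ t : ℝ, t * Real.exp (-t^2/2) = 0 := by
  have := integral_of_hasDerivAt_of_tendsto hasDeriv_negexp integrable_id_exp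
    tendsto_negexp_bot tendsto_negexp_top
  simpa using this

lemma integral_id_gd : ∫ t, t * gd t = 0 := by
  unfold gd
  rw [show (fun t : ℝ => t * ((2*Real.pi) ^ (-(1:ℝ)/2) * Real.exp (-t^2/2)))
      = fun t : ℝ => (2*Real.pi) ^ (-(1:ℝ)/2) * (t * Real.exp (-t^2/2)) from
    funext fun t => by ring]
  rw [integral_const_mul, integral_id_exp, mul_zero]

lemma integral_sq_exp : ∫ t : ℝ, t^2 * Real.exp (-t^2/2) = Real.sqrt (2 * Real.pi) := by
  have h := integral_mul_deriv_eq_deriv_mul_of_integrable (u := fun t : ℝ => t)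
    (v := fun t : ℝ => -Real.exp (-t^2/2)) (u' := fun _ => (1:ℝ))
    (v' := fun t : ℝ => t * Real.exp (-t^2/2))
    (fun x _ => hasDerivAt_id x) (fun x _ => hasDeriv_negexp x)
    (by refine integrable_sq_exp.congr (Filter.Eventually.of_forall fun t => ?_)
        simp only [Pi.mul_apply]; ring)
    (by refine (integrable_exp_part.neg).congr (Filter.Eventually.of_forall fun t => ?_)
        simp only [Pi.mul_apply, Pi.neg_apply]; ring)
    (by refine (integrable_id_exp.neg).congr (Filter.Eventually.of_forall fun t => ?_)
        simp only [Pi.mul_apply, Pi.neg_apply]; ring)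
  have h2 : ∫ t : ℝ, t * (t * Real.exp (-t^2/2)) = ∫ t : ℝ, t^2 * Real.exp (-t^2/2) := by
    congr 1; funext t; ring
  rw [h2] at h
  rw [h]
  have h3 : ∫ t : ℝ, (1:ℝ) * (-Real.exp (-t^2/2)) = -Real.sqrt (2 * Real.pi) := by
    simp_rw [one_mul]
    rw [integral_neg, integral_exp_part]
  rw [h3, neg_neg]

lemma integral_sq_gd : ∫ t, t^2 * gd t = 1 := by
  unfold gd
  rw [show (fun t : ℝ => t^2 * ((2*Real.pi) ^ (-(1:ℝ)/2) * Real.exp (-t^2/2)))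
      = fun t : ℝ => (2*Real.pi) ^ (-(1:ℝ)/2) * (t^2 * Real.exp (-t^2/2)) from
    funext fun t => by ring]
  rw [integral_const_mul, integral_sq_exp, c_mul_sqrt]


section Dim

variable {n : ℕ}

noncomputable def dens (n : ℕ) (x : EuclideanSpace ℝ (Fin n)) : ℝ :=
  (2 * Real.pi) ^ (-(n : ℝ) / 2) * Real.exp (-‖x‖ ^ 2 / 2)

lemma dens_nonneg (x : EuclideanSpace ℝ (Fin n)) : 0 ≤ dens n x := by
  unfold dens; positivity

lemma dens_eq_prod (x : EuclideanSpace ℝ (Fin n)) : dens n x = ∏ l, gd (x l) := by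
  unfold dens gd
  rw [Finset.prod_mul_distrib, Finset.prod_const, Finset.card_univ, Fintype.card_fin]
  congr 1
  · rw [← Real.rpow_natCast ((2*Real.pi) ^ (-(1:ℝ)/2)) n, ← Real.rpow_mul (by positivity)]
    congr 1; ring
  · rw [← Real.exp_sum]
    congr 1
    have hn : ‖x‖^2 = ∑ l, (x l)^2 := by
      rw [EuclideanSpace.norm_eq, Real.sq_sqrt (by positivity)]
      simp [sq_abs]
    rw [hn, neg_div, Finset.sum_div, ← Finset.sum_neg_distrib]
    simp [neg_div]

lemma meas_dens : Measurable fun x : EuclideanSpace ℝ (Fin n) => (dens n x).toNNReal := by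
  apply Measurable.real_toNNReal
  unfold dens
  fun_prop

lemma stdGaussian_eq : stdGaussian n
    = (volume : Measure (EuclideanSpace ℝ (Fin n))).withDensity
        fun x => ((dens n x).toNNReal : ENNReal) := by
  rfl

lemma smul_form (g : EuclideanSpace ℝ (Fin n) → ℝ) :
    (fun x : EuclideanSpace ℝ (Fin n) => (dens n x).toNNReal • g x)
      = fun x => (∏ l, gd (x l)) * g x := by
  funext x
  rw [NNReal.smul_def, smul_eq_mul, Real.coe_toNNReal _ (dens_nonneg x), dens_eq_prod]

lemma coord_symm_apply (y : Fin n → ℝ) (l : Fin n) :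
    ((MeasurableEquiv.toLp 2 (Fin n → ℝ)) y) l = y l := by
  rfl

lemma stdGaussian_integral_eq (g : EuclideanSpace ℝ (Fin n) → ℝ) :
    ∫ x, g x ∂stdGaussian n
      = ∫ y : Fin n → ℝ,
          (∏ l, gd (y l)) * g ((MeasurableEquiv.toLp 2 (Fin n → ℝ)) y) := by
  rw [stdGaussian_eq, integral_withDensity_eq_integral_smul meas_dens g,
    ← ((EuclideanSpace.volume_preserving_symm_measurableEquiv_toLp (Fin n)).symm).integral_comp
      (MeasurableEquiv.measurableEmbedding _)]
  congr 1
  funext y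
  rw [NNReal.smul_def, smul_eq_mul, Real.coe_toNNReal _ (dens_nonneg _), dens_eq_prod]
  simp [coord_symm_apply]

lemma stdGaussian_integrable_iff (g : EuclideanSpace ℝ (Fin n) → ℝ) :
    Integrable g (stdGaussian n) ↔ Integrable
      (fun y : Fin n → ℝ =>
        (∏ l, gd (y l)) * g ((MeasurableEquiv.toLp 2 (Fin n → ℝ)) y)) := by
  rw [stdGaussian_eq, integrable_withDensity_iff_integrable_smul meas_dens,
    ← ((EuclideanSpace.volume_preserving_symm_measurableEquiv_toLp (Fin n)).symm).integrable_comp_emb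
      (MeasurableEquiv.measurableEmbedding _)]
  refine integrable_congr (Filter.Eventually.of_forall fun y => ?_)
  show (dens n _).toNNReal • g _ = _
  rw [NNReal.smul_def, smul_eq_mul, Real.coe_toNNReal _ (dens_nonneg _), dens_eq_prod]
  simp [coord_symm_apply]

lemma prod_aux (q : Fin n → ℝ → ℝ) (hq : ∀ l, Integrable (fun t => q l t * gd t)) :
    Integrable (fun x : EuclideanSpace ℝ (Fin n) => ∏ l, q l (x l)) (stdGaussian n) ∧
    ∫ x, (∏ l, q l (x l)) ∂stdGaussian n = ∏ l, ∫ t, q l t * gd t := by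
  have hfun : (fun y : Fin n → ℝ => (∏ l, gd (y l)) *
      ∏ l, q l (((MeasurableEquiv.toLp 2 (Fin n → ℝ)) y) l))
      = fun y => ∏ l, (q l (y l) * gd (y l)) := by
    funext y
    simp only [coord_symm_apply]
    rw [Finset.prod_mul_distrib, mul_comm]
  constructor
  · rw [stdGaussian_integrable_iff, hfun]
    exact Integrable.fintype_prod (𝕜 := ℝ) hq
  · rw [stdGaussian_integral_eq, hfun]
    simpa using integral_fintype_prod_volume_eq_prod (ι := Fin n) (fun l (t : ℝ) => q l t * gd t)

lemma integrable_dens : Integrable (dens n) (volume : Measure (EuclideanSpace ℝ (Fin n))) := by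
  rw [← ((EuclideanSpace.volume_preserving_symm_measurableEquiv_toLp (Fin n)).symm).integrable_comp_emb
      (MeasurableEquiv.measurableEmbedding _), MeasurableEquiv.symm_symm]
  have : (dens n ∘ (MeasurableEquiv.toLp 2 (Fin n → ℝ)))
      = fun y : Fin n → ℝ => ∏ l, gd (y l) := by
    funext y
    show dens n _ = _
    rw [dens_eq_prod]
    simp [coord_symm_apply]
  rw [this]
  simpa [volume_pi] using Integrable.fintype_prod (𝕜 := ℝ) (f := fun _ : Fin n => gd) fun _ => integrable_gd

lemma integral_dens : ∫ x, dens n x ∂(volume : Measure (EuclideanSpace ℝ (Fin n))) = 1 := by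
  rw [← ((EuclideanSpace.volume_preserving_symm_measurableEquiv_toLp (Fin n)).symm).integral_comp
      (MeasurableEquiv.measurableEmbedding _), MeasurableEquiv.symm_symm]
  have : ∀ y : Fin n → ℝ, dens n ((MeasurableEquiv.toLp 2 (Fin n → ℝ)) y)
      = ∏ l, gd (y l) := by
    intro y; rw [dens_eq_prod]; simp [coord_symm_apply]
  simp_rw [this]
  have := integral_fintype_prod_volume_eq_prod (ι := Fin n) (fun _ : Fin n => gd)
  simpa [integral_gd] using this

instance isProb_stdGaussian : IsProbabilityMeasure (stdGaussian n) := by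
  constructor
  rw [stdGaussian_eq, withDensity_apply _ MeasurableSet.univ, Measure.restrict_univ]
  have h1 : ∫⁻ x, ((dens n x).toNNReal : ENNReal)
      ∂(volume : Measure (EuclideanSpace ℝ (Fin n))) = ENNReal.ofReal (∫ x, dens n x) := by
    rw [ofReal_integral_eq_lintegral_ofReal integrable_dens
      (Filter.Eventually.of_forall dens_nonneg)]
    rfl
  rw [h1, integral_dens, ENNReal.ofReal_one]

lemma coord_q_integrable (l : Fin n) (j : Fin n) :
    Integrable (fun t : ℝ => (if j = l then t else 1) * gd t) := by
  split_ifs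
  · exact integrable_id_gd
  · simpa using integrable_gd

lemma pair_q_integrable (l m : Fin n) (j : Fin n) :
    Integrable (fun t : ℝ => ((if j = l then t else 1) * (if j = m then t else 1)) * gd t) := by
  split_ifs
  · exact integrable_sq_gd.congr (Filter.Eventually.of_forall fun t => by ring)
  · exact integrable_id_gd.congr (Filter.Eventually.of_forall fun t => by ring)
  · exact integrable_id_gd.congr (Filter.Eventually.of_forall fun t => by ring)
  · exact integrable_gd.congr (Filter.Eventually.of_forall fun t => by ring)

lemma coord_prod_eq (l : Fin n) (x : EuclideanSpace ℝ (Fin n)) :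
    (∏ j, if j = l then x j else (1:ℝ)) = x l := by
  simp

lemma pair_prod_eq (l m : Fin n) (x : EuclideanSpace ℝ (Fin n)) :
    (∏ j, (if j = l then x j else (1:ℝ)) * (if j = m then x j else 1)) = x l * x m := by
  rw [Finset.prod_mul_distrib]
  simp

lemma integrable_coord (l : Fin n) :
    Integrable (fun x : EuclideanSpace ℝ (Fin n) => x l) (stdGaussian n) := by
  have := (prod_aux (fun j t => if j = l then t else 1) (coord_q_integrable l)).1
  exact this.congr (Filter.Eventually.of_forall fun x => coord_prod_eq l x)

lemma integral_coord (l : Fin n) :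
    ∫ x, x l ∂stdGaussian n = 0 := by
  have h := (prod_aux (fun j t => if j = l then t else 1) (coord_q_integrable l)).2
  have h2 : ∫ x, (∏ j, if j = l then x j else (1:ℝ)) ∂stdGaussian n
      = ∫ x, x l ∂stdGaussian n := by
    congr 1; funext x; exact coord_prod_eq l x
  rw [h2] at h
  rw [h]
  refine Finset.prod_eq_zero (Finset.mem_univ l) ?_
  simp only [if_pos rfl]
  exact integral_id_gd

lemma integrable_pair (l m : Fin n) :
    Integrable (fun x : EuclideanSpace ℝ (Fin n) => x l * x m) (stdGaussian n) := by
  have := (prod_aux (fun j t => (if j = l then t else 1) * (if j = m then t else 1))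
    (pair_q_integrable l m)).1
  exact this.congr (Filter.Eventually.of_forall fun x => pair_prod_eq l m x)

lemma integral_pair (l m : Fin n) :
    ∫ x, x l * x m ∂stdGaussian n = if l = m then 1 else 0 := by
  have h := (prod_aux (fun j t => (if j = l then t else 1) * (if j = m then t else 1))
    (pair_q_integrable l m)).2
  have h2 : ∫ x, (∏ j, (if j = l then x j else (1:ℝ)) * (if j = m then x j else 1)) ∂stdGaussian n
      = ∫ x, x l * x m ∂stdGaussian n := by
    congr 1; funext x; exact pair_prod_eq l m x
  rw [h2] at h
  rw [h]
  by_cases hlm : l = m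
  · subst hlm
    rw [if_pos rfl]
    refine Finset.prod_eq_one fun j _ => ?_
    by_cases hj : j = l
    · simp only [if_pos hj]
      have : ∫ t : ℝ, (t * t) * gd t = ∫ t : ℝ, t^2 * gd t := by
        congr 1; funext t; ring
      rw [this, integral_sq_gd]
    · simp only [if_neg hj, one_mul]
      exact integral_gd
  · rw [if_neg hlm]
    refine Finset.prod_eq_zero (Finset.mem_univ l) ?_
    simp only [if_pos rfl, if_neg hlm, mul_one]
    exact integral_id_gd

lemma integrable_id_vec :
    Integrable (fun x : EuclideanSpace ℝ (Fin n) => x) (stdGaussian n) := by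
  have hrep : (fun x : EuclideanSpace ℝ (Fin n) => x)
      = fun x => ∑ l, x l • EuclideanSpace.single l (1:ℝ) := by
    funext x
    apply PiLp.ext
    intro l
    rw [show (∑ j, x j • EuclideanSpace.single j (1:ℝ)) l = ∑ j, (x j • EuclideanSpace.single j (1:ℝ)) l from by
      rw [WithLp.ofLp_sum]; exact Finset.sum_apply l Finset.univ _]
    simp [EuclideanSpace.single_apply]
  rw [hrep]
  exact integrable_finset_sum _ fun l _ => (integrable_coord l).smul_const _

lemma integral_id_vec : ∫ x, x ∂stdGaussian n = 0 := by
  apply PiLp.ext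
  intro l
  have h := (EuclideanSpace.proj (𝕜 := ℝ) l).integral_comp_comm integrable_id_vec
  have h2 : (EuclideanSpace.proj (𝕜 := ℝ) l) (∫ x, x ∂stdGaussian n) = ∫ x, x l ∂stdGaussian n := by
    rw [← h]; rfl
  have h3 : (EuclideanSpace.proj (𝕜 := ℝ) l) (∫ x, x ∂stdGaussian n)
      = (∫ x, x ∂stdGaussian n) l := rfl
  rw [← h3, h2, integral_coord]
  rfl

end Dim

lemma sum_integral_partition {α : Type*} [MeasurableSpace α] (μ : Measure α) {k : ℕ}
    {A : Fin k → Set α} (hmeas : ∀ i, MeasurableSet (A i))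
    (hdisj : Pairwise fun i j => Disjoint (A i) (A j)) (hcover : (⋃ i, A i) = Set.univ)
    {X : Type*} [NormedAddCommGroup X] [NormedSpace ℝ X] [CompleteSpace X]
    {g : α → X} (hg : Integrable g μ) :
    ∑ i, ∫ x in A i, g x ∂μ = ∫ x, g x ∂μ := by
  rw [← setIntegral_univ, ← hcover, integral_iUnion hmeas hdisj hg.integrableOn, tsum_fintype]

end CBAux


open CBAux in
/-- `C(B) ≤ R(B)²`: the value of the Gaussian-moment quadratic form of `B` on every measurable
partition of `ℝ^{k−1}` is at most the squared radius of the minimal enclosing ball of the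
Gram vectors of `B`, hence the maximum `C(B)` is at most `R(B)²`. -/
theorem cB_le_rB_sq (k : ℕ)
    (v : Fin k → EuclideanSpace ℝ (Fin k)) (b : Fin k → Fin k → ℝ)
    (hb : ∀ i j, b i j = ⟪v i, v j⟫)
    (w : EuclideanSpace ℝ (Fin k)) (R : ℝ) (hR : ∀ i, ‖v i - w‖ ≤ R)
    (hmin : ∀ (w' : EuclideanSpace ℝ (Fin k)) (R' : ℝ), (∀ i, ‖v i - w'‖ ≤ R') → R ≤ R')
    (A : Fin k → Set (EuclideanSpace ℝ (Fin (k - 1)))) (hmeas : ∀ i, MeasurableSet (A i))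
    (hdisj : Pairwise fun i j => Disjoint (A i) (A j)) (hcover : (⋃ i, A i) = Set.univ) :
    ∑ i, ∑ j, b i j *
        ⟪∫ x in A i, x ∂stdGaussian (k - 1), ∫ x in A j, x ∂stdGaussian (k - 1)⟫ ≤
      R ^ 2 := by
  classical
  set γ := stdGaussian (k - 1) with hγdef
  haveI : IsProbabilityMeasure γ := isProb_stdGaussian
  have hId : Integrable (fun x : EuclideanSpace ℝ (Fin (k-1)) => x) γ := integrable_id_vec
  set z : Fin k → EuclideanSpace ℝ (Fin (k - 1)) := fun i => ∫ x in A i, x ∂γ with hzdef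
  show ∑ i, ∑ j, b i j * ⟪z i, z j⟫ ≤ R ^ 2
  have hzsum : ∑ i, z i = 0 := by
    have h := sum_integral_partition γ hmeas hdisj hcover hId
    have h2 : ∑ i, z i = ∫ x, x ∂γ := h
    rw [h2, hγdef]
    exact integral_id_vec
  have hinner_r : ∀ i, ∑ j, (⟪z i, z j⟫ : ℝ) = 0 := fun i => by
    rw [← inner_sum, hzsum, inner_zero_right]
  have hinner_l : ∀ j, ∑ i, (⟪z i, z j⟫ : ℝ) = 0 := fun j => by
    rw [← sum_inner, hzsum, inner_zero_left]
  have expand : ∀ i j, (⟪v i - w, v j - w⟫ : ℝ) * ⟪z i, z j⟫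
      = b i j * ⟪z i, z j⟫ - ⟪v i, w⟫ * ⟪z i, z j⟫ - ⟪w, v j⟫ * ⟪z i, z j⟫
        + ⟪w, w⟫ * ⟪z i, z j⟫ := by
    intro i j
    rw [hb i j, inner_sub_left, inner_sub_right, inner_sub_right]
    ring
  have stepA : ∑ i, ∑ j, b i j * ⟪z i, z j⟫
      = ∑ i, ∑ j, (⟪v i - w, v j - w⟫ : ℝ) * ⟪z i, z j⟫ := by
    have h1 : ∑ i, ∑ j, (⟪v i, w⟫ : ℝ) * ⟪z i, z j⟫ = 0 :=
      Finset.sum_eq_zero fun i _ => by rw [← Finset.mul_sum, hinner_r i, mul_zero]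
    have h2 : ∑ i, ∑ j, (⟪w, v j⟫ : ℝ) * ⟪z i, z j⟫ = 0 := by
      rw [Finset.sum_comm]
      exact Finset.sum_eq_zero fun j _ => by rw [← Finset.mul_sum, hinner_l j, mul_zero]
    have h3 : ∑ i, ∑ j, (⟪w, w⟫ : ℝ) * ⟪z i, z j⟫ = 0 :=
      Finset.sum_eq_zero fun i _ => by rw [← Finset.mul_sum, hinner_r i, mul_zero]
    have h4 : ∑ i, ∑ j, (⟪v i - w, v j - w⟫ : ℝ) * ⟪z i, z j⟫
        = ∑ i, ∑ j, (b i j * ⟪z i, z j⟫ - ⟪v i, w⟫ * ⟪z i, z j⟫ - ⟪w, v j⟫ * ⟪z i, z j⟫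
          + ⟪w, w⟫ * ⟪z i, z j⟫) := by
      exact Finset.sum_congr rfl fun i _ => Finset.sum_congr rfl fun j _ => expand i j
    rw [h4]
    simp only [Finset.sum_add_distrib, Finset.sum_sub_distrib]
    rw [h1, h2, h3]
    ring
  have tri : ∀ (F : Fin k → Fin k → Fin k → ℝ),
      ∑ i, ∑ j, ∑ m, F i j m = ∑ m, ∑ i, ∑ j, F i j m := by
    intro F
    calc ∑ i, ∑ j, ∑ m, F i j m = ∑ i, ∑ m, ∑ j, F i j m :=
          Finset.sum_congr rfl fun i _ => Finset.sum_comm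
      _ = ∑ m, ∑ i, ∑ j, F i j m := Finset.sum_comm
  have hs_norm : ∀ m : Fin k, ‖∑ i, (v i - w) m • z i‖^2
      = ∑ i, ∑ j, (v i - w) m * ((v j - w) m * ⟪z i, z j⟫) := by
    intro m
    rw [← real_inner_self_eq_norm_sq, sum_inner]
    refine Finset.sum_congr rfl fun i _ => ?_
    rw [real_inner_smul_left, inner_sum, Finset.mul_sum]
    refine Finset.sum_congr rfl fun j _ => ?_
    rw [real_inner_smul_right]
  have hinner_coord : ∀ i j : Fin k, (⟪v i - w, v j - w⟫ : ℝ)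
      = ∑ m, (v i - w) m * (v j - w) m := by
    intro i j
    simp [PiLp.inner_apply, RCLike.inner_apply, conj_trivial]
    exact Finset.sum_congr rfl fun _ _ => mul_comm _ _
  have stepB : ∑ i, ∑ j, (⟪v i - w, v j - w⟫ : ℝ) * ⟪z i, z j⟫
      = ∑ m, ‖∑ i, (v i - w) m • z i‖^2 := by
    calc ∑ i, ∑ j, (⟪v i - w, v j - w⟫ : ℝ) * ⟪z i, z j⟫
        = ∑ i, ∑ j, ∑ m, (v i - w) m * ((v j - w) m * ⟪z i, z j⟫) := by
          refine Finset.sum_congr rfl fun i _ => Finset.sum_congr rfl fun j _ => ?_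
          rw [hinner_coord i j, Finset.sum_mul]
          exact Finset.sum_congr rfl fun m _ => by ring
      _ = ∑ m, ∑ i, ∑ j, (v i - w) m * ((v j - w) m * ⟪z i, z j⟫) := tri _
      _ = ∑ m, ‖∑ i, (v i - w) m • z i‖^2 :=
          Finset.sum_congr rfl fun m _ => (hs_norm m).symm
  have stepC : ∀ c : Fin k → ℝ,
      ‖∑ i, c i • z i‖^2 ≤ ∑ i, (c i)^2 * (γ (A i)).toReal := by
    intro c
    set ζ : EuclideanSpace ℝ (Fin (k-1)) := ∑ i, c i • z i with hζ
    have hinnerz : ∀ x : EuclideanSpace ℝ (Fin (k-1)), (⟪ζ, x⟫ : ℝ) = ∑ l, ζ l * x l := by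
      intro x
      simp [PiLp.inner_apply, RCLike.inner_apply, conj_trivial]
      exact Finset.sum_congr rfl fun _ _ => mul_comm _ _
    have hH : Integrable (fun x => (⟪ζ, x⟫ : ℝ)) γ := hId.const_inner ζ
    have hH2fun : (fun x : EuclideanSpace ℝ (Fin (k-1)) => (⟪ζ, x⟫ : ℝ)^2)
        = fun x => ∑ l, ∑ m, (ζ l * ζ m) * (x l * x m) := by
      funext x
      rw [hinnerz x, sq, Finset.sum_mul_sum]
      exact Finset.sum_congr rfl fun l _ => Finset.sum_congr rfl fun m _ => by ring
    have hH2 : Integrable (fun x : EuclideanSpace ℝ (Fin (k-1)) => (⟪ζ, x⟫ : ℝ)^2) γ := by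
      rw [hH2fun]
      exact integrable_finset_sum _ fun l _ =>
        integrable_finset_sum _ fun m _ => ((integrable_pair l m).const_mul _)
    have hIH2 : ∫ x, (⟪ζ, x⟫ : ℝ)^2 ∂γ = ‖ζ‖^2 := by
      rw [hH2fun, integral_finset_sum _ (fun l _ =>
        integrable_finset_sum _ fun m _ => ((integrable_pair l m).const_mul _))]
      have hl : ∀ l : Fin (k-1), ∫ x, (∑ m, (ζ l * ζ m) * (x l * x m)) ∂γ = ζ l * ζ l := by
        intro l
        rw [integral_finset_sum _ (fun m _ => ((integrable_pair l m).const_mul _))]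
        have hm : ∀ m : Fin (k-1), ∫ x, (ζ l * ζ m) * (x l * x m) ∂γ
            = (ζ l * ζ m) * if l = m then 1 else 0 := by
          intro m
          rw [integral_const_mul, hγdef, integral_pair l m]
        rw [Finset.sum_congr rfl fun m _ => hm m]
        simp
      rw [Finset.sum_congr rfl fun l _ => hl l, ← real_inner_self_eq_norm_sq, hinnerz ζ]
    have hzi : ∀ i, ∫ x in A i, (⟪ζ, x⟫ : ℝ) ∂γ = ⟪ζ, z i⟫ := by
      intro i
      exact integral_inner hId.integrableOn ζ
    have hsum_czeta : ∑ i, c i * ⟪ζ, z i⟫ = ‖ζ‖^2 := by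
      calc ∑ i, c i * (⟪ζ, z i⟫ : ℝ) = ∑ i, (⟪ζ, c i • z i⟫ : ℝ) :=
            Finset.sum_congr rfl fun i _ => (real_inner_smul_right ζ (z i) (c i)).symm
        _ = ⟪ζ, ∑ i, c i • z i⟫ := (inner_sum _ _ _).symm
        _ = ⟪ζ, ζ⟫ := by rw [← hζ]
        _ = ‖ζ‖^2 := real_inner_self_eq_norm_sq ζ
    have hexp : ∀ i, ∫ x in A i, (c i - ⟪ζ, x⟫ : ℝ)^2 ∂γ
        = (c i)^2 * (γ (A i)).toReal - 2 * (c i * ⟪ζ, z i⟫)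
          + ∫ x in A i, (⟪ζ, x⟫:ℝ)^2 ∂γ := by
      intro i
      have hrw : ∫ x in A i, (c i - ⟪ζ, x⟫ : ℝ)^2 ∂γ
          = ∫ x in A i, (((c i)^2 - (2 * c i) * ⟪ζ, x⟫) + (⟪ζ, x⟫:ℝ)^2) ∂γ := by
        congr 1; funext x; ring
      rw [hrw, integral_add, integral_sub, setIntegral_const, integral_const_mul, hzi i]
      · rw [smul_eq_mul, measureReal_def]; ring
      · exact integrableOn_const
      · exact (hH.integrableOn).const_mul _
      · exact (integrableOn_const).sub
          ((hH.integrableOn).const_mul _)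
      · exact hH2.integrableOn
    have hnn : (0:ℝ) ≤ ∑ i, ∫ x in A i, (c i - ⟪ζ, x⟫ : ℝ)^2 ∂γ :=
      Finset.sum_nonneg fun i _ => integral_nonneg fun x => sq_nonneg _
    have hsplit : ∑ i, ∫ x in A i, (c i - ⟪ζ, x⟫ : ℝ)^2 ∂γ
        = ∑ i, (c i)^2 * (γ (A i)).toReal - 2 * ‖ζ‖^2 + ‖ζ‖^2 := by
      rw [Finset.sum_congr rfl fun i _ => hexp i]
      rw [Finset.sum_add_distrib, Finset.sum_sub_distrib]
      rw [sum_integral_partition γ hmeas hdisj hcover hH2, hIH2]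
      have : ∑ i, 2 * (c i * ⟪ζ, z i⟫) = 2 * ∑ i, c i * ⟪ζ, z i⟫ := by
        rw [Finset.mul_sum]
      rw [this, hsum_czeta]
    rw [hsplit] at hnn
    linarith
  calc ∑ i, ∑ j, b i j * ⟪z i, z j⟫
      = ∑ i, ∑ j, (⟪v i - w, v j - w⟫ : ℝ) * ⟪z i, z j⟫ := stepA
    _ = ∑ m, ‖∑ i, (v i - w) m • z i‖^2 := stepB
    _ ≤ ∑ m, ∑ i, ((v i - w) m)^2 * (γ (A i)).toReal :=
        Finset.sum_le_sum fun m _ => stepC fun i => (v i - w) m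
    _ = ∑ i, ‖v i - w‖^2 * (γ (A i)).toReal := by
        rw [Finset.sum_comm]
        refine Finset.sum_congr rfl fun i _ => ?_
        rw [← Finset.sum_mul]
        congr 1
        rw [← real_inner_self_eq_norm_sq, hinner_coord i i]
        exact Finset.sum_congr rfl fun m _ => (pow_two _)
    _ ≤ ∑ i, R^2 * (γ (A i)).toReal := by
        refine Finset.sum_le_sum fun i _ => ?_
        refine mul_le_mul_of_nonneg_right ?_ ENNReal.toReal_nonneg
        exact pow_le_pow_left₀ (norm_nonneg _) (hR i) 2
    _ = R^2 := by
        rw [← Finset.mul_sum]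
        have h1 : γ (⋃ i, A i) = ∑' i, γ (A i) := measure_iUnion hdisj hmeas
        rw [hcover, tsum_fintype] at h1
        have h2 : (1 : ENNReal) = ∑ i, γ (A i) := by
          rw [← h1]; exact (measure_univ).symm
        have h3 := congrArg ENNReal.toReal h2
        rw [ENNReal.toReal_sum (fun i _ => measure_ne_top _ _)] at h3
        simp only [ENNReal.toReal_one] at h3
        rw [← h3, mul_one]
end

section
/- Let A be an n×n symmetric positive semidefinite matrix which is centered (Σ_{i,j} a_{ij} = 0), let v_1,…,v_k ∈ ℝ^k with Gram matrix B, let R(B) and w(B) be the radius and center of the minimal enclosing ball of {v_1,…,v_k}, and define SDP(A|B) = max over x_1,…,x_n ∈ S^{n−1} of Σ_{i,j} a_{ij}⟨x_i,x_j⟩ and Clust(A|B) = max over σ:{1,…,n}→{1,…,k} of Σ_{i,j} a_{ij} b_{σ(i)σ(j)}. Then SDP(A|B) ≥ Clust(A|B)/R(B)². -/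
open RealInnerProductSpace
open scoped Matrix

/-- `SDP(A|B) ≥ Clust(A|B)/R(B)²`: for every clustering `σ` there are unit vectors whose SDP
value is at least the clustering value divided by `R(B)²`. -/
theorem sdp_ge_clust_div_rsq (n k : ℕ)
    (A : Matrix (Fin n) (Fin n) ℝ) (hA : A.PosSemidef)
    (hcent : ∑ i, ∑ j, A i j = 0)
    (v : Fin k → EuclideanSpace ℝ (Fin k)) (b : Fin k → Fin k → ℝ)
    (hb : ∀ i j, b i j = ⟪v i, v j⟫)
    (w : EuclideanSpace ℝ (Fin k)) (R : ℝ) (hR : ∀ i, ‖v i - w‖ ≤ R)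
    (hmin : ∀ (w' : EuclideanSpace ℝ (Fin k)) (R' : ℝ), (∀ i, ‖v i - w'‖ ≤ R') → R ≤ R')
    (σ : Fin n → Fin k) :
    ∃ x : Fin n → EuclideanSpace ℝ (Fin n), (∀ i, ‖x i‖ = 1) ∧
      (∑ i, ∑ j, A i j * b (σ i) (σ j)) / R ^ 2 ≤ ∑ i, ∑ j, A i j * ⟪x i, x j⟫ := by
  classical
  -- trivial case n = 0
  rcases Nat.eq_zero_or_pos n with hn | hn
  · subst hn
    exact ⟨fun i => i.elim0, fun i => i.elim0, by simp⟩
  -- row and column sums of A vanish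
  have h1 : A *ᵥ (fun _ => (1 : ℝ)) = 0 := by
    apply (hA.dotProduct_mulVec_zero_iff _).mp
    simpa [dotProduct, Matrix.mulVec] using hcent
  have hrow : ∀ i, ∑ j, A i j = 0 := by
    intro i
    have := congrFun h1 i
    simpa [Matrix.mulVec, dotProduct] using this
  have hsym : ∀ i j, A i j = A j i := fun i j => by simpa using hA.1.apply j i
  have hcol : ∀ j, ∑ i, A i j = 0 := by
    intro j
    calc ∑ i, A i j = ∑ i, A j i := Finset.sum_congr rfl fun i _ => hsym i j
    _ = 0 := hrow j
  -- R ≥ 0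
  have hR0 : 0 ≤ R := le_trans (norm_nonneg _) (hR (σ ⟨0, hn⟩))
  rcases eq_or_lt_of_le hR0 with hR0' | hRpos
  · -- R = 0 : all distances are ≤ 0, take constant unit vectors
    refine ⟨fun _ => EuclideanSpace.single ⟨0, hn⟩ (1 : ℝ), fun i => by simp, ?_⟩
    have : R ^ 2 = 0 := by rw [← hR0']; ring
    rw [this, div_zero]
    have : ∀ i j : Fin n, ⟪(EuclideanSpace.single (⟨0, hn⟩ : Fin n) (1 : ℝ)),
        (EuclideanSpace.single (⟨0, hn⟩ : Fin n) (1 : ℝ))⟫ = (1 : ℝ) := by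
      intro i j; simp [EuclideanSpace.inner_single_left]
    calc (0 : ℝ) = ∑ i, ∑ j, A i j := hcent.symm
      _ ≤ ∑ i, ∑ j, A i j * ⟪(EuclideanSpace.single (⟨0, hn⟩ : Fin n) (1 : ℝ)),
          (EuclideanSpace.single (⟨0, hn⟩ : Fin n) (1 : ℝ))⟫ := by
        apply le_of_eq
        refine Finset.sum_congr rfl fun i _ => Finset.sum_congr rfl fun j _ => ?_
        rw [this i j, mul_one]
  -- main case R > 0
  have hRne : R ≠ 0 := ne_of_gt hRpos
  set y : Fin n → EuclideanSpace ℝ (Fin k) := fun i => R⁻¹ • (v (σ i) - w) with hy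
  have hynorm : ∀ i, ‖y i‖ ≤ 1 := by
    intro i
    rw [hy]
    simp only [norm_smul, norm_inv, Real.norm_eq_abs, abs_of_pos hRpos]
    rw [inv_mul_le_iff₀ hRpos, mul_one]
    exact hR (σ i)
  set s : Fin n → ℝ := fun i => Real.sqrt (1 - ‖y i‖ ^ 2) with hs
  have hs2 : ∀ i, s i ^ 2 = 1 - ‖y i‖ ^ 2 := by
    intro i
    rw [hs]
    apply Real.sq_sqrt
    have := hynorm i
    nlinarith [norm_nonneg (y i)]
  set X : Matrix (Fin n) (Fin n) ℝ := fun i j => ⟪y i, y j⟫ + s i * s j with hX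
  have hXsym : X.IsHermitian := by
    refine Matrix.IsHermitian.ext fun i j => ?_
    simp only [Matrix.conjTranspose_apply, hX, star_trivial]
    rw [real_inner_comm, mul_comm]
  have hXpsd : X.PosSemidef := by
    refine Matrix.PosSemidef.of_dotProduct_mulVec_nonneg hXsym fun c => ?_
    have e1 : star c ⬝ᵥ X *ᵥ c
        = ⟪(∑ i, c i • y i), (∑ j, c j • y j)⟫ + (∑ i, c i * s i) ^ 2 := by
      rw [sq, Finset.sum_mul_sum]
      rw [sum_inner]
      simp only [inner_sum, real_inner_smul_left, real_inner_smul_right]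
      rw [← Finset.sum_add_distrib]
      simp only [dotProduct, Matrix.mulVec, star_trivial, hX, Finset.mul_sum,
        ← Finset.sum_add_distrib]
      refine Finset.sum_congr rfl fun i _ => Finset.sum_congr rfl fun j _ => ?_
      ring
    rw [e1]
    have := real_inner_self_nonneg (x := ∑ i, c i • y i)
    positivity
  obtain ⟨D, hD⟩ : ∃ D, X = Dᴴ * D := by
    open scoped MatrixOrder in exact CStarAlgebra.nonneg_iff_eq_star_mul_self.mp hXpsd.nonneg
  set x : Fin n → EuclideanSpace ℝ (Fin n) :=
    fun i => (WithLp.equiv 2 (Fin n → ℝ)).symm (fun l => D l i) with hxdef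
  have hinner : ∀ i j, ⟪x i, x j⟫ = X i j := by
    intro i j
    have : X i j = (Dᴴ * D) i j := by rw [hD]
    rw [this]
    simp [hxdef, PiLp.inner_apply, Matrix.mul_apply, RCLike.inner_apply]
    exact Finset.sum_congr rfl fun l _ => mul_comm _ _
  have hXdiag : ∀ i, X i i = 1 := by
    intro i
    simp only [hX]
    rw [real_inner_self_eq_norm_sq, ← pow_two (s i), hs2 i]
    ring
  have hxnorm : ∀ i, ‖x i‖ = 1 := by
    intro i
    have h2 : ‖x i‖ ^ 2 = 1 := by
      rw [← real_inner_self_eq_norm_sq, hinner i i, hXdiag i]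
    rw [← Real.sqrt_sq (norm_nonneg (x i)), h2, Real.sqrt_one]
  refine ⟨x, hxnorm, ?_⟩
  -- expandterms
  have key : ∑ i, ∑ j, A i j * ⟪v (σ i) - w, v (σ j) - w⟫
      = ∑ i, ∑ j, A i j * b (σ i) (σ j) := by
    have expand : ∀ i j : Fin n, ⟪v (σ i) - w, v (σ j) - w⟫
        = b (σ i) (σ j) - ⟪v (σ i), w⟫ - ⟪w, v (σ j)⟫ + ⟪w, w⟫ := by
      intro i j
      rw [hb]
      rw [inner_sub_left, inner_sub_right, inner_sub_right]
      ring
    simp_rw [expand, mul_add, mul_sub, Finset.sum_add_distrib, Finset.sum_sub_distrib]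
    have t1 : ∑ i, ∑ j, A i j * ⟪v (σ i), w⟫ = 0 := by
      refine Finset.sum_eq_zero fun i _ => ?_
      rw [← Finset.sum_mul, hrow i, zero_mul]
    have t2 : ∑ i, ∑ j, A i j * ⟪w, v (σ j)⟫ = 0 := by
      rw [Finset.sum_comm]
      refine Finset.sum_eq_zero fun j _ => ?_
      rw [← Finset.sum_mul, hcol j, zero_mul]
    have t3 : ∑ i : Fin n, ∑ j : Fin n, A i j * ⟪w, w⟫ = 0 := by
      simp_rw [← Finset.sum_mul]
      rw [hcent, zero_mul]
    rw [t1, t2, t3]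
    ring
  have hyinner : ∀ i j, ⟪y i, y j⟫ = R⁻¹ * (R⁻¹ * ⟪v (σ i) - w, v (σ j) - w⟫) := by
    intro i j
    rw [hy]
    rw [real_inner_smul_left, real_inner_smul_right]
  have hsum1 : ∑ i, ∑ j, A i j * ⟪y i, y j⟫
      = (∑ i, ∑ j, A i j * b (σ i) (σ j)) / R ^ 2 := by
    simp_rw [hyinner]
    have hinv : ∀ c : ℝ, R⁻¹ * (R⁻¹ * c) = c / R ^ 2 := by
      intro c; rw [pow_two, div_eq_mul_inv, mul_inv]; ring
    simp_rw [hinv, ← mul_div_assoc, ← Finset.sum_div]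
    rw [key]
  have hsum2 : 0 ≤ ∑ i, ∑ j, A i j * (s i * s j) := by
    have := hA.dotProduct_mulVec_nonneg s
    have e : star s ⬝ᵥ A *ᵥ s = ∑ i, ∑ j, A i j * (s i * s j) := by
      simp only [dotProduct, Matrix.mulVec, star_trivial, Finset.mul_sum]
      refine Finset.sum_congr rfl fun i _ => Finset.sum_congr rfl fun j _ => ?_
      ring
    rw [e] at this
    exact this
  have hsplit : ∑ i, ∑ j, A i j * ⟪x i, x j⟫
      = (∑ i, ∑ j, A i j * ⟪y i, y j⟫) + ∑ i, ∑ j, A i j * (s i * s j) := by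
    simp_rw [hinner, hX, mul_add, Finset.sum_add_distrib]
  rw [hsplit, ← hsum1]
  linarith
end

section
/- Let (Ω = {1,…,k}, μ) be a probability space with all atoms positive, and (X_0 ≡ 1, X_1,…,X_{k−1}) an orthonormal basis of L²(μ) as above. For ℓ ∈ {1,…,n}, let f^{dict,ℓ}: Ω^n → Δ_k be the dictatorship f^{dict,ℓ}(ω) = e_i iff ω_ℓ = i, with components f_i. Let B = (⟨v_i, v_j⟩) be a k×k Gram matrix. Then the level-one objective OBJ(f^{dict,ℓ}) := Σ_{i,j} b_{ij} Σ_{|σ|=1} f̂_i(σ) f̂_j(σ) equals Σ_{i=1}^k μ(i) ‖v_i − Σ_{j=1}^k μ(j) v_j‖². -/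
open RealInnerProductSpace

/-- The level-one Fourier objective of the dictatorship `f^{dict,ℓ}` on `(Ω^n, μ^n)` equals
`Σ_i μ(i) ‖v_i − Σ_j μ(j) v_j‖²`. -/
theorem dictatorship_objective (k n : ℕ) (hk : 0 < k)
    (μ : Fin k → ℝ) (hpos : ∀ ω, 0 < μ ω) (hsum : ∑ ω, μ ω = 1)
    (X : Fin k → Fin k → ℝ) (hX0 : X ⟨0, hk⟩ = fun _ => 1)
    (horth : ∀ i j, ∑ ω, μ ω * (X i ω * X j ω) = if i = j then 1 else 0)
    (hcomp : ∀ ω ω', ∑ i, X i ω * X i ω' = if ω = ω' then 1 / μ ω else 0)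
    (v : Fin k → EuclideanSpace ℝ (Fin k)) (b : Fin k → Fin k → ℝ)
    (hb : ∀ i j, b i j = ⟪v i, v j⟫)
    (ℓ : Fin n)
    (f : Fin k → (Fin n → Fin k) → ℝ)
    (hf : ∀ i ω, f i ω = if ω ℓ = i then 1 else 0)
    (coeff : Fin k → (Fin n → Fin k) → ℝ)
    (hcoeff : ∀ i σ, coeff i σ =
      ∑ ω : Fin n → Fin k, (∏ t, μ (ω t)) * f i ω * ∏ t, X (σ t) (ω t)) :
    ∑ i, ∑ j, b i j *
        ∑ σ ∈ Finset.univ.filter (fun σ : Fin n → Fin k =>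
          (Finset.univ.filter fun t => σ t ≠ ⟨0, hk⟩).card = 1),
          coeff i σ * coeff j σ =
      ∑ i, μ i * ‖v i - ∑ j, μ j • v j‖ ^ 2 := by
  classical
  set z : Fin k := ⟨0, hk⟩ with hzdef
  have hXz : ∀ a, X z a = 1 := fun a => by rw [hX0]
  -- Step 1: coefficient formula
  have hc : ∀ i σ, coeff i σ =
      (μ i * X (σ ℓ) i) * (if ∀ t ∈ Finset.univ.erase ℓ, σ t = z then (1:ℝ) else 0) := by
    intro i σ
    rw [hcoeff]
    have h1 : ∀ ω : Fin n → Fin k,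
        (∏ t, μ (ω t)) * f i ω * ∏ t, X (σ t) (ω t)
          = ∏ t, (μ (ω t) * X (σ t) (ω t) * (if ℓ = t then (if ω t = i then 1 else 0) else 1)) := by
      intro ω
      rw [hf, Finset.prod_mul_distrib, Finset.prod_mul_distrib, Finset.prod_ite_eq]
      simp only [Finset.mem_univ, if_true]
      ring
    set g : Fin n → Fin k → ℝ :=
      fun t a => μ a * X (σ t) a * (if ℓ = t then (if a = i then 1 else 0) else 1) with hg
    rw [Finset.sum_congr rfl (fun ω _ => h1 ω)]
    have h2 : (∑ ω ∈ Fintype.piFinset (fun _ : Fin n => (Finset.univ : Finset (Fin k))),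
        ∏ t, g t (ω t)) = ∏ t, ∑ a, g t a := (Finset.prod_univ_sum _ g).symm
    rw [Fintype.piFinset_univ] at h2
    rw [h2]
    rw [← Finset.mul_prod_erase Finset.univ _ (Finset.mem_univ ℓ)]
    have hℓ : ∑ a, μ a * X (σ ℓ) a * (if ℓ = ℓ then (if a = i then (1:ℝ) else 0) else 1)
        = μ i * X (σ ℓ) i := by
      simp [mul_ite]
    have ht : ∀ t ∈ Finset.univ.erase ℓ,
        (∑ a, μ a * X (σ t) a * (if ℓ = t then (if a = i then (1:ℝ) else 0) else 1))
          = if σ t = z then 1 else 0 := by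
      intro t htmem
      have hne : ℓ ≠ t := (Finset.ne_of_mem_erase htmem).symm
      have : ∑ a, μ a * X (σ t) a * (if ℓ = t then (if a = i then (1:ℝ) else 0) else 1)
          = ∑ a, μ a * (X z a * X (σ t) a) := by
        apply Finset.sum_congr rfl; intro a _
        rw [if_neg hne, hXz]; ring
      rw [this, horth]
      simp [eq_comm]
    rw [hℓ, Finset.prod_congr rfl ht, Finset.prod_boole]
    by_cases h : ∀ t ∈ Finset.univ.erase ℓ, σ t = z <;> simp [h]
  -- Step 2: level-one sum for a pair i j
  have key : ∀ i j, (∑ σ ∈ Finset.univ.filter (fun σ : Fin n → Fin k =>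
          (Finset.univ.filter fun t => σ t ≠ z).card = 1),
          coeff i σ * coeff j σ) = (if i = j then μ j else 0) - μ i * μ j := by
    intro i j
    have hprod : ∀ σ, coeff i σ * coeff j σ =
        if ∀ t ∈ Finset.univ.erase ℓ, σ t = z then
          (μ i * X (σ ℓ) i) * (μ j * X (σ ℓ) j) else 0 := by
      intro σ
      rw [hc, hc]
      split_ifs with hP <;> ring
    rw [Finset.sum_congr rfl (fun σ _ => hprod σ), ← Finset.sum_filter]
    have hbij : ∑ σ ∈ (Finset.univ.filter (fun σ : Fin n → Fin k =>
          (Finset.univ.filter fun t => σ t ≠ z).card = 1)).filter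
            (fun σ => ∀ t ∈ Finset.univ.erase ℓ, σ t = z),
          (μ i * X (σ ℓ) i) * (μ j * X (σ ℓ) j)
        = ∑ r ∈ Finset.univ.filter (· ≠ z), (μ i * X r i) * (μ j * X r j) := by
      apply Finset.sum_nbij' (fun σ => σ ℓ) (fun r => fun t => if t = ℓ then r else z)
      · intro σ hσ
        simp only [Finset.mem_filter, Finset.mem_univ, true_and] at hσ ⊢
        obtain ⟨hcard, hP⟩ := hσ
        intro hzℓ
        have hall : ∀ t, σ t = z := by
          intro t
          by_cases htℓ : t = ℓ
          · rw [htℓ]; exact hzℓ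
          · exact hP t (Finset.mem_erase.2 ⟨htℓ, Finset.mem_univ t⟩)
        simp [hall] at hcard
      · intro r hr
        simp only [Finset.mem_filter, Finset.mem_univ, true_and] at hr ⊢
        constructor
        · have : (Finset.univ.filter fun t => (if t = ℓ then r else z) ≠ z) = {ℓ} := by
            ext t
            by_cases htℓ : t = ℓ <;> simp [htℓ, hr]
          rw [this, Finset.card_singleton]
        · intro t htmem
          rw [if_neg (Finset.ne_of_mem_erase htmem)]
      · intro σ hσ
        simp only [Finset.mem_filter, Finset.mem_univ, true_and] at hσ
        funext t
        by_cases htℓ : t = ℓ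
        · simp [htℓ]
        · simp [htℓ, hσ.2 t (Finset.mem_erase.2 ⟨htℓ, Finset.mem_univ t⟩)]
      · intro r _; simp
      · intro σ _; rfl
    rw [hbij, Finset.filter_ne', Finset.sum_erase_eq_sub (Finset.mem_univ z)]
    have h1 : ∑ r, (μ i * X r i) * (μ j * X r j)
        = μ i * μ j * ∑ r, X r i * X r j := by
      rw [Finset.mul_sum]; apply Finset.sum_congr rfl; intro r _; ring
    rw [h1, hcomp, hXz, hXz]
    by_cases hij : i = j
    · subst hij
      simp only [if_pos rfl]
      have hμ : μ i ≠ 0 := (hpos i).ne'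
      field_simp
      rw [if_pos trivial, if_pos trivial, mul_sub, mul_one_div, pow_two, mul_self_div_self, mul_one]
    · simp [hij]
  -- Step 3: inner-product algebra
  set m : EuclideanSpace ℝ (Fin k) := ∑ j, μ j • v j with hmdef
  have hvm : ∀ i, ⟪v i, m⟫ = ∑ j, μ j * ⟪v i, v j⟫ := by
    intro i
    rw [hmdef, inner_sum]
    exact Finset.sum_congr rfl fun j _ => real_inner_smul_right _ _ _
  have hmm : ⟪m, m⟫ = ∑ i, μ i * ⟪v i, m⟫ := by
    rw [hmdef, sum_inner]
    exact Finset.sum_congr rfl fun i _ => real_inner_smul_left _ _ _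
  have e1 : ∀ i, ∑ j, b i j *
      ((if i = j then μ j else 0) - μ i * μ j)
        = μ i * ⟪v i, v i⟫ - μ i * ⟪v i, m⟫ := by
    intro i
    have : ∀ j, b i j * ((if i = j then μ j else 0) - μ i * μ j)
        = (if i = j then μ j * ⟪v i, v j⟫ else 0) - μ i * (μ j * ⟪v i, v j⟫) := by
      intro j
      rw [hb]
      by_cases hij : i = j <;> simp [hij] <;> ring
    rw [Finset.sum_congr rfl (fun j _ => this j), Finset.sum_sub_distrib,
      Finset.sum_ite_eq, ← Finset.mul_sum, ← hvm]
    simp [real_inner_comm]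
  calc ∑ i, ∑ j, b i j *
        ∑ σ ∈ Finset.univ.filter (fun σ : Fin n → Fin k =>
          (Finset.univ.filter fun t => σ t ≠ z).card = 1),
          coeff i σ * coeff j σ
      = ∑ i, (μ i * ⟪v i, v i⟫ - μ i * ⟪v i, m⟫) := by
        apply Finset.sum_congr rfl; intro i _
        rw [← e1 i]
        apply Finset.sum_congr rfl; intro j _
        rw [key i j]
    _ = ∑ i, μ i * ‖v i - m‖ ^ 2 := by
        have expand : ∀ i, μ i * ‖v i - m‖ ^ 2
            = μ i * ⟪v i, v i⟫ - 2 * (μ i * ⟪v i, m⟫) + μ i * ⟪m, m⟫ := by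
          intro i
          rw [norm_sub_sq_real, ← real_inner_self_eq_norm_sq, ← real_inner_self_eq_norm_sq]
          ring
        symm
        rw [Finset.sum_congr rfl (fun i _ => expand i)]
        have split : ∀ i, μ i * ⟪v i, v i⟫ - 2 * (μ i * ⟪v i, m⟫) + μ i * ⟪m, m⟫
            = (μ i * ⟪v i, v i⟫ - μ i * ⟪v i, m⟫) + (μ i * ⟪m, m⟫ - μ i * ⟪v i, m⟫) := by
          intro i; ring
        have h0 : ∑ i : Fin k, (μ i * ⟪m, m⟫ - μ i * ⟪v i, m⟫) = 0 := by
          rw [Finset.sum_sub_distrib, ← Finset.sum_mul, hsum, one_mul, hmm, sub_self]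
        rw [Finset.sum_congr rfl (fun i _ => split i), Finset.sum_add_distrib, h0, add_zero]
end
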